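/- arXiv:1412.6937 — 3 statements merged into one kernel-verified Lean document; each statement's English description precedes it below -/
import Mathlib

section
/- Suppose G is connected and each f_ij belongs to 𝒰. Then the set of equilibria of the formation control system whose centroid is at the origin, {p ∈ P_G : F(p) = 0 and Σ_{i=1}^N x_i = 0}, is a compact subset of P_G; in particular it is bounded and bounded away from the collision set {p : x_i = x_j for some edge (i,j)}. -/
open scoped BigOperators
open scoped Classical

noncomputable section

abbrev Plane : Type := EuclideanSpace ℝ (Fin 2)

abbrev Config (ι : Type) : Type := PiLp 2 (fun _ : ι => Plane)

def ConfigSpace {N : ℕ} (G : SimpleGraph (Fin N)) : Set (Config (Fin N)) :=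
  {p | ∀ i j : Fin N, G.Adj i j → p i ≠ p j}

noncomputable def formationField {ι : Type} [Fintype ι] (Adj : ι → ι → Prop)
    (f : ι → ι → ℝ → ℝ) (q : Config ι) : Config ι :=
  WithLp.toLp 2 (fun v => ∑ u, if Adj v u then f v u ‖q v - q u‖ • (q u - q v) else 0)

noncomputable def potential {N : ℕ} (G : SimpleGraph (Fin N)) (f : Fin N → Fin N → ℝ → ℝ)
    (p : Config (Fin N)) : ℝ :=
  ∑ i, ∑ j, if G.Adj i j ∧ i < j then ∫ t in (1:ℝ)..(‖p i - p j‖), t * f i j t else 0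

def MemU (f : ℝ → ℝ) : Prop :=
  ContDiffOn ℝ 1 f (Set.Ioi 0) ∧
  (∀ x : ℝ, 0 < x → 0 < deriv (fun t => t * f t) x) ∧
  (∃! d : ℝ, 0 < d ∧ f d = 0) ∧
  Filter.Tendsto (fun x : ℝ => ∫ t in x..(1:ℝ), t * f t) (nhdsWithin 0 (Set.Ioi 0)) Filter.atBot

def SO2 (θ : Matrix (Fin 2) (Fin 2) ℝ) : Prop :=
  θ ∈ Matrix.orthogonalGroup (Fin 2) ℝ ∧ θ.det = 1

noncomputable def rotAct {ι : Type} (θ : Matrix (Fin 2) (Fin 2) ℝ) (v : Plane) (p : Config ι) :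
    Config ι :=
  WithLp.toLp 2 (fun i => Matrix.toEuclideanLin θ (p i) + v)

def orbitSE2 {ι : Type} (p : Config ι) : Set (Config ι) :=
  {q | ∃ θ : Matrix (Fin 2) (Fin 2) ℝ, SO2 θ ∧ ∃ v : Plane, q = rotAct θ v p}

noncomputable def basisVec {ι : Type} [DecidableEq ι] (i : ι) (a : Fin 2) : Config ι :=
  WithLp.toLp 2 (Pi.single i (EuclideanSpace.single a (1:ℝ)))

noncomputable def hessMat {ι : Type} [Fintype ι] [DecidableEq ι] (Φ : Config ι → ℝ)
    (p : Config ι) : Matrix (ι × Fin 2) (ι × Fin 2) ℝ :=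
  Matrix.of fun q r => fderiv ℝ (fun x => fderiv ℝ Φ x (basisVec q.1 q.2)) p (basisVec r.1 r.2)

noncomputable def jacMat {ι : Type} [Fintype ι] [DecidableEq ι] (F : Config ι → Config ι)
    (p : Config ι) : Matrix (ι × Fin 2) (ι × Fin 2) ℝ :=
  Matrix.of fun q r => fderiv ℝ (fun x => F x q.1 q.2) p (basisVec r.1 r.2)

noncomputable def posIndex {n : Type} [Fintype n] [DecidableEq n] (A : Matrix n n ℝ) : ℕ :=
  Multiset.card (A.charpoly.roots.filter fun x => 0 < x)

noncomputable def negIndex {n : Type} [Fintype n] [DecidableEq n] (A : Matrix n n ℝ) : ℕ :=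
  Multiset.card (A.charpoly.roots.filter fun x => x < 0)

noncomputable def nullIndex {n : Type} [Fintype n] [DecidableEq n] (A : Matrix n n ℝ) : ℕ :=
  Multiset.card (A.charpoly.roots.filter fun x => x = 0)

inductive IsTriangulatedLaman : {N : ℕ} → SimpleGraph (Fin N) → Prop
  | base : IsTriangulatedLaman (⊤ : SimpleGraph (Fin 2))
  | grow {N : ℕ} (G' : SimpleGraph (Fin (N + 2))) (G : SimpleGraph (Fin (N + 3)))
      (j k : Fin (N + 2)) :
      IsTriangulatedLaman G' → G'.Adj j k →
      (∀ a b : Fin (N + 2), G.Adj a.castSucc b.castSucc ↔ G'.Adj a b) →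
      (∀ a : Fin (N + 2), G.Adj a.castSucc (Fin.last (N + 2)) ↔ a = j ∨ a = k) →
      IsTriangulatedLaman G

def StronglyRigid {N : ℕ} (G : SimpleGraph (Fin N)) (p : Config (Fin N)) : Prop :=
  ∀ i j k : Fin N, G.Adj i j → G.Adj i k → G.Adj j k →
    ¬ Collinear ℝ ({p i, p j, p k} : Set Plane)

def TriangleInequalities {N : ℕ} (G : SimpleGraph (Fin N)) (d : Fin N → Fin N → ℝ) : Prop :=
  ∀ i j k : Fin N, G.Adj i j → G.Adj i k → G.Adj j k → d j k < d i j + d i k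

def vertexSet {N : ℕ} (B : Finset (Sym2 (Fin N))) : Finset (Fin N) :=
  Finset.univ.filter fun v => ∃ e ∈ B, v ∈ e

def inducedSubgraph {N : ℕ} (B : Finset (Sym2 (Fin N))) : SimpleGraph ↥(vertexSet B) :=
  SimpleGraph.fromEdgeSet {e | Sym2.map Subtype.val e ∈ B}

def InducedTLaman {N : ℕ} (B : Finset (Sym2 (Fin N))) : Prop :=
  ∃ (M : ℕ) (H : SimpleGraph (Fin M)), IsTriangulatedLaman H ∧ Nonempty (inducedSubgraph B ≃g H)

def IsLineLamanPart {N : ℕ} (p : Config (Fin N)) (B : Finset (Sym2 (Fin N))) : Prop :=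
  InducedTLaman B ∧ Collinear ℝ (p '' (vertexSet B : Set (Fin N)))

def IsLineLamanPartition {N : ℕ} (G : SimpleGraph (Fin N)) (p : Config (Fin N))
    (P : Finset (Finset (Sym2 (Fin N)))) : Prop :=
  (∀ B ∈ P, B.Nonempty ∧ (B : Set (Sym2 (Fin N))) ⊆ G.edgeSet ∧ IsLineLamanPart p B) ∧
  ∀ e ∈ G.edgeSet, ∃! B, B ∈ P ∧ e ∈ B

def Refines {N : ℕ} (Q P : Finset (Finset (Sym2 (Fin N)))) : Prop :=
  ∀ B ∈ Q, ∃ C ∈ P, B ⊆ C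

def IsIndependentPartition {N : ℕ} (G : SimpleGraph (Fin N)) (p : Config (Fin N))
    (P : Finset (Finset (Sym2 (Fin N)))) : Prop :=
  IsLineLamanPartition G p P ∧ ∀ Q, IsLineLamanPartition G p Q → Refines Q P

def subConfig {N : ℕ} (p : Config (Fin N)) (B : Finset (Sym2 (Fin N))) :
    Config ↥(vertexSet B) :=
  WithLp.toLp 2 (fun v => p v.1)

noncomputable def subField {N : ℕ} (f : Fin N → Fin N → ℝ → ℝ) (B : Finset (Sym2 (Fin N))) :
    Config ↥(vertexSet B) → Config ↥(vertexSet B) :=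
  formationField (fun u v => s(u.1, v.1) ∈ B) (fun u v => f u.1 v.1)

def IsEquivariantMorse {N : ℕ} (G : SimpleGraph (Fin N)) (f : Fin N → Fin N → ℝ → ℝ) : Prop :=
  (∃ S : Finset (Config (Fin N)),
      {p | p ∈ ConfigSpace G ∧ formationField G.Adj f p = 0} = ⋃ q ∈ S, orbitSE2 q) ∧
  ∀ p, p ∈ ConfigSpace G → formationField G.Adj f p = 0 →
    nullIndex (jacMat (formationField G.Adj f) p) = 3

noncomputable def distMap {N : ℕ} (G : SimpleGraph (Fin N)) (p : Config (Fin N)) :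
    ↥G.edgeFinset → ℝ :=
  fun e => Sym2.lift ⟨fun i j => ‖p i - p j‖ ^ 2, fun i j => by dsimp only; rw [norm_sub_rev]⟩ e.1

open Filter MeasureTheory

open scoped RealInnerProductSpace

namespace FCAux

lemma memU_contOn {f : ℝ → ℝ} (hf : MemU f) : ContinuousOn (fun t => t * f t) (Set.Ioi 0) :=
  continuousOn_id.mul (hf.1.continuousOn)

lemma memU_strictMono {f : ℝ → ℝ} (hf : MemU f) :
    StrictMonoOn (fun t => t * f t) (Set.Ioi 0) := by
  apply strictMonoOn_of_deriv_pos (convex_Ioi 0) (memU_contOn hf)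
  intro x hx
  rw [interior_Ioi] at hx
  exact hf.2.1 x hx

lemma memU_exists_small {f : ℝ → ℝ} (hf : MemU f) (C : ℝ) : ∃ x, 0 < x ∧ x * f x < C := by
  by_contra hcon
  push_neg at hcon
  have h1 : ∀ᶠ x in nhdsWithin (0:ℝ) (Set.Ioi 0), (∫ t in x..(1:ℝ), t * f t) ≤ -|C| - 1 :=
    hf.2.2.2 (Filter.eventually_atBot.2 ⟨-|C| - 1, fun y hy => hy⟩)
  have h2 : ∀ᶠ x in nhdsWithin (0:ℝ) (Set.Ioi 0), x ∈ Set.Ioo (0:ℝ) 1 := by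
    have hIio : Set.Iio (1:ℝ) ∈ nhds (0:ℝ) := Iio_mem_nhds one_pos
    have := Filter.inter_mem (self_mem_nhdsWithin (s := Set.Ioi (0:ℝ)) (a := (0:ℝ)))
      (nhdsWithin_le_nhds hIio)
    filter_upwards [this] with x hx
    exact ⟨hx.1, hx.2⟩
  obtain ⟨x, hx1, hx2⟩ := (h1.and h2).exists
  obtain ⟨hx0, hx1'⟩ := hx2
  have hint : IntervalIntegrable (fun t => t * f t) MeasureTheory.volume x 1 := by
    apply ContinuousOn.intervalIntegrable
    apply (memU_contOn hf).mono
    rw [Set.uIcc_of_le hx1'.le]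
    intro t ht
    exact lt_of_lt_of_le hx0 ht.1
  have hintC : IntervalIntegrable (fun _ : ℝ => C) MeasureTheory.volume x 1 :=
    intervalIntegrable_const
  have hmono : (∫ t in x..(1:ℝ), C) ≤ ∫ t in x..(1:ℝ), t * f t := by
    apply intervalIntegral.integral_mono_on hx1'.le hintC hint
    intro t ht
    exact hcon t (lt_of_lt_of_le hx0 ht.1)
  rw [intervalIntegral.integral_const] at hmono
  have : (1 - x) • C ≥ -|C| := by
    rw [smul_eq_mul]
    have h1x : 0 ≤ 1 - x := by linarith
    have h1x' : 1 - x ≤ 1 := by linarith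
    rcases le_or_gt 0 C with hC | hC
    · nlinarith [abs_nonneg C]
    · rw [abs_of_neg hC]; nlinarith
  linarith

lemma sum_antisym {ι : Type*} (S : Finset ι) (a : ι → ι → ℝ) (h : ∀ i j, a i j = -a j i) :
    ∑ i ∈ S, ∑ j ∈ S, a i j = 0 := by
  have h2 : ∑ i ∈ S, ∑ j ∈ S, a i j = -∑ i ∈ S, ∑ j ∈ S, a i j := by
    nth_rewrite 2 [Finset.sum_comm]
    rw [← Finset.sum_neg_distrib]
    apply Finset.sum_congr rfl
    intro i _
    rw [← Finset.sum_neg_distrib]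
    exact Finset.sum_congr rfl fun j _ => h i j
  linarith

variable {N : ℕ} (G : SimpleGraph (Fin N)) (f : Fin N → Fin N → ℝ → ℝ)

/-- scalar equilibrium identity at one vertex -/
lemma SV {p : Config (Fin N)} (hF : formationField G.Adj f p = 0) (i : Fin N) (v : Plane) :
    ∑ j, (if G.Adj i j then f i j ‖p i - p j‖ * ⟪p j - p i, v⟫ else 0) = 0 := by
  have h0 : (∑ u, if G.Adj i u then f i u ‖p i - p u‖ • (p u - p i) else 0) = (0 : Plane) := by
    have := congrArg (fun q : Config (Fin N) => q i) hF
    simpa [formationField] using this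
  have h1 : ⟪(∑ u, if G.Adj i u then f i u ‖p i - p u‖ • (p u - p i) else 0 : Plane), v⟫ = 0 := by
    rw [h0, inner_zero_left]
  rw [sum_inner] at h1
  refine Eq.trans ?_ h1
  apply Finset.sum_congr rfl
  intro j _
  by_cases h : G.Adj i j
  · rw [if_pos h, if_pos h, real_inner_smul_left]
  · rw [if_neg h, if_neg h, inner_zero_left]

/-- cut identity -/
lemma CUT (hsym : ∀ i j, f i j = f j i) {p : Config (Fin N)}
    (hF : formationField G.Adj f p = 0) (S : Finset (Fin N)) (v : Plane) :
    ∑ x ∈ S ×ˢ Sᶜ, (if G.Adj x.1 x.2 then f x.1 x.2 ‖p x.1 - p x.2‖ * ⟪p x.2 - p x.1, v⟫ else 0)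
      = 0 := by
  set a : Fin N → Fin N → ℝ :=
    fun i j => if G.Adj i j then f i j ‖p i - p j‖ * ⟪p j - p i, v⟫ else 0 with ha
  have hanti : ∀ i j, a i j = -a j i := by
    intro i j
    simp only [ha]
    by_cases h : G.Adj i j
    · rw [if_pos h, if_pos h.symm, hsym i j, norm_sub_rev, ← neg_sub (p j) (p i),
        inner_neg_left]
      ring
    · rw [if_neg h, if_neg (fun h' => h h'.symm)]
      ring
  have hrow : ∀ i, ∑ j, a i j = 0 := fun i => SV G f hF i v
  have hsplit : ∑ i ∈ S, (∑ j ∈ S, a i j + ∑ j ∈ Sᶜ, a i j) = 0 := by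
    have : ∑ i ∈ S, ∑ j, a i j = 0 := Finset.sum_eq_zero fun i _ => hrow i
    rw [← this]
    apply Finset.sum_congr rfl
    intro i _
    rw [Finset.sum_add_sum_compl]
  rw [Finset.sum_add_distrib, sum_antisym S a hanti, zero_add] at hsplit
  have hps : ∑ x ∈ S ×ˢ Sᶜ, a x.1 x.2 = ∑ i ∈ S, ∑ j ∈ Sᶜ, a i j :=
    Finset.sum_product' S Sᶜ a
  exact hps.trans hsplit

/-- dilation identity : sum of w * r over ordered adjacent pairs is zero -/
lemma IB (hsym : ∀ i j, f i j = f j i) {p : Config (Fin N)}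
    (hF : formationField G.Adj f p = 0) :
    ∑ x : Fin N × Fin N,
      (if G.Adj x.1 x.2 then (‖p x.1 - p x.2‖ * f x.1 x.2 ‖p x.1 - p x.2‖) * ‖p x.1 - p x.2‖
        else 0) = 0 := by
  set b : Fin N → Fin N → ℝ :=
    fun i j => if G.Adj i j then f i j ‖p i - p j‖ * ⟪p j - p i, p i⟫ else 0 with hb
  have hrow : ∀ i, ∑ j, b i j = 0 := fun i => SV G f hF i (p i)
  have h1 : ∑ i, ∑ j, b i j = 0 := Finset.sum_eq_zero fun i _ => hrow i
  have h2 : ∑ i, ∑ j, b j i = 0 := by rw [Finset.sum_comm]; exact h1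
  have hkey : ∀ i j, (if G.Adj i j then (‖p i - p j‖ * f i j ‖p i - p j‖) * ‖p i - p j‖ else 0)
      = -(b i j + b j i) := by
    intro i j
    simp only [hb]
    by_cases h : G.Adj i j
    · rw [if_pos h, if_pos h, if_pos h.symm, hsym i j, norm_sub_rev (p j)]
      have : ⟪p j - p i, p i⟫ + ⟪p i - p j, p j⟫ = -(‖p i - p j‖ * ‖p i - p j‖) := by
        have h3 : ⟪p i - p j, p i - p j⟫ = ‖p i - p j‖ * ‖p i - p j‖ :=
          real_inner_self_eq_norm_mul_norm _
        have h4 : ⟪p j - p i, p i⟫ = - ⟪p i - p j, p i⟫ := by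
          rw [← inner_neg_left, neg_sub]
        rw [h4, ← h3, inner_sub_right]
        ring
      rw [← mul_add, this]
      ring
    · rw [if_neg h, if_neg h, if_neg (fun h' => h h'.symm)]; ring
  set c : Fin N → Fin N → ℝ := fun i j =>
    if G.Adj i j then (‖p i - p j‖ * f i j ‖p i - p j‖) * ‖p i - p j‖ else 0 with hc
  have hps : ∑ x ∈ Finset.univ ×ˢ Finset.univ, c x.1 x.2 = ∑ i, ∑ j, c i j :=
    Finset.sum_product' Finset.univ Finset.univ c
  rw [← Finset.univ_product_univ] at *
  calc ∑ x ∈ Finset.univ ×ˢ Finset.univ, (if G.Adj x.1 x.2 then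
          (‖p x.1 - p x.2‖ * f x.1 x.2 ‖p x.1 - p x.2‖) * ‖p x.1 - p x.2‖ else 0)
      = ∑ i, ∑ j, (if G.Adj i j then (‖p i - p j‖ * f i j ‖p i - p j‖) * ‖p i - p j‖ else 0) :=
        hps
    _ = ∑ i, ∑ j, -(b i j + b j i) := by
        apply Finset.sum_congr rfl; intro i _; apply Finset.sum_congr rfl; intro j _
        exact hkey i j
    _ = 0 := by
        simp only [Finset.sum_neg_distrib, Finset.sum_add_distrib]
        rw [h1, h2]; ring

lemma HALF (hsym : ∀ i j, f i j = f j i) {p : Config (Fin N)} (hp : p ∈ ConfigSpace G)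
    (hF : formationField G.Adj f p = 0) (B : ℝ) (hB0 : 0 ≤ B)
    (hBub : ∀ i j, G.Adj i j → ‖p i - p j‖ * f i j ‖p i - p j‖ ≤ B)
    {a b : Fin N} (hab : G.Adj a b) :
    -((Fintype.card (Fin N × Fin N) : ℝ) * B) ≤ ‖p a - p b‖ * f a b ‖p a - p b‖ := by
  have hσ : 0 < ‖p b - p a‖ := by
    rw [norm_pos_iff, sub_ne_zero]
    exact (hp a b hab).symm
  set σ := ‖p b - p a‖ with hσdef
  set u : Plane := σ⁻¹ • (p b - p a) with hudef
  have hu : ‖u‖ = 1 := by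
    rw [hudef, norm_smul, Real.norm_eq_abs, abs_inv, abs_of_pos hσ, ← hσdef,
      inv_mul_cancel₀ hσ.ne']
  set proj : Fin N → ℝ := fun i => ⟪p i - p a, u⟫ with hprojdef
  obtain ⟨θ, hθmem, hθnot⟩ :=
    (Set.Ioo_infinite hσ).exists_notMem_finset (Finset.univ.image proj)
  have hθ0 : 0 < θ := hθmem.1
  have hθσ : θ < σ := hθmem.2
  have hθne : ∀ i, proj i ≠ θ := fun i h =>
    hθnot (Finset.mem_image.mpr ⟨i, Finset.mem_univ i, h⟩)
  set S : Finset (Fin N) := Finset.univ.filter (fun i => proj i < θ) with hSdef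
  have hprojb : proj b = σ := by
    rw [hprojdef]
    simp only [hudef]
    rw [real_inner_smul_right, real_inner_self_eq_norm_mul_norm, ← hσdef]
    field_simp
  have haS : a ∈ S := by
    rw [hSdef, Finset.mem_filter]
    refine ⟨Finset.mem_univ a, ?_⟩
    have : proj a = 0 := by rw [hprojdef]; simp
    rw [this]; exact hθ0
  have hbS : b ∈ Sᶜ := by
    rw [Finset.mem_compl, hSdef, Finset.mem_filter]
    rw [hprojb]
    push_neg
    exact fun _ => hθσ.le
  have hcut := CUT G f hsym hF S u
  have hmemab : ((a, b) : Fin N × Fin N) ∈ S ×ˢ Sᶜ := Finset.mem_product.mpr ⟨haS, hbS⟩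
  set T : Fin N × Fin N → ℝ := fun x =>
    if G.Adj x.1 x.2 then f x.1 x.2 ‖p x.1 - p x.2‖ * ⟪p x.2 - p x.1, u⟫ else 0 with hTdef
  have hval : T (a, b) = ‖p a - p b‖ * f a b ‖p a - p b‖ := by
    rw [hTdef]
    simp only [if_pos hab]
    have h1 : ⟪p b - p a, u⟫ = σ := hprojb
    rw [norm_sub_rev (p a) (p b), ← hσdef, h1]
    ring
  have hbound : ∀ x ∈ (S ×ˢ Sᶜ).erase (a, b), T x ≤ B := by
    intro x hx
    obtain ⟨hx1, hx2⟩ := Finset.mem_product.mp (Finset.mem_of_mem_erase hx)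
    simp only [hTdef]
    by_cases h : G.Adj x.1 x.2
    · rw [if_pos h]
      have hp1 : proj x.1 < θ := (Finset.mem_filter.mp hx1).2
      have hp2 : ¬ proj x.2 < θ := by
        have := Finset.mem_compl.mp hx2
        rw [hSdef, Finset.mem_filter] at this
        push_neg at this
        exact not_lt.mpr (this (Finset.mem_univ x.2))
      have hgt : 0 < ⟪p x.2 - p x.1, u⟫ := by
        have heq : ⟪p x.2 - p x.1, u⟫ = proj x.2 - proj x.1 := by
          rw [hprojdef]
          simp only []
          rw [← inner_sub_left, sub_sub_sub_cancel_right]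
        rw [heq]
        have h2 : θ < proj x.2 := lt_of_le_of_ne (not_lt.mp hp2) (hθne x.2).symm
        linarith
      rcases le_or_gt (f x.1 x.2 ‖p x.1 - p x.2‖) 0 with hf0 | hf0
      · exact le_trans (mul_nonpos_of_nonpos_of_nonneg hf0 hgt.le) hB0
      · have hcs : ⟪p x.2 - p x.1, u⟫ ≤ ‖p x.2 - p x.1‖ := by
          have := real_inner_le_norm (p x.2 - p x.1) u
          rwa [hu, mul_one] at this
        have hm : f x.1 x.2 ‖p x.1 - p x.2‖ * ⟪p x.2 - p x.1, u⟫
            ≤ f x.1 x.2 ‖p x.1 - p x.2‖ * ‖p x.2 - p x.1‖ :=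
          mul_le_mul_of_nonneg_left hcs hf0.le
        refine le_trans hm ?_
        rw [norm_sub_rev (p x.2) (p x.1)]
        have := hBub x.1 x.2 h
        linarith
    · rw [if_neg h]; exact hB0
  have hsum : T (a, b) + ∑ x ∈ (S ×ˢ Sᶜ).erase (a, b), T x = 0 := by
    rw [Finset.add_sum_erase _ T hmemab]
    exact hcut
  have hcard : (((S ×ˢ Sᶜ).erase (a, b)).card : ℝ) ≤ (Fintype.card (Fin N × Fin N) : ℝ) :=
    Nat.cast_le.mpr (Finset.card_le_univ _)
  have hrest : ∑ x ∈ (S ×ˢ Sᶜ).erase (a, b), T x ≤ (Fintype.card (Fin N × Fin N) : ℝ) * B := by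
    have h1 := Finset.sum_le_card_nsmul _ T B hbound
    rw [nsmul_eq_mul] at h1
    exact le_trans h1 (mul_le_mul_of_nonneg_right hcard hB0)
  rw [← hval]
  linarith
lemma bounds (hsym : ∀ i j, f i j = f j i) (hU : ∀ i j, G.Adj i j → MemU (f i j))
    (hPne : ∃ a b : Fin N, G.Adj a b) :
    ∃ C₀ M : ℝ, 0 ≤ C₀ ∧ 0 < M ∧
      ∀ p ∈ ConfigSpace G, formationField G.Adj f p = 0 →
      ∀ i j, G.Adj i j →
        (-C₀ ≤ ‖p i - p j‖ * f i j ‖p i - p j‖ ∧ ‖p i - p j‖ ≤ M) := by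
  classical
  set P : Finset (Fin N × Fin N) := Finset.univ.filter (fun q => G.Adj q.1 q.2) with hPdef
  have hmemP : ∀ q : Fin N × Fin N, q ∈ P ↔ G.Adj q.1 q.2 := by
    intro q; rw [hPdef, Finset.mem_filter]; simp
  have hPne' : P.Nonempty := by
    obtain ⟨a, b, hab⟩ := hPne
    exact ⟨(a, b), (hmemP (a, b)).mpr hab⟩
  set dd : Fin N × Fin N → ℝ :=
    fun q => if h : G.Adj q.1 q.2 then ((hU q.1 q.2 h).2.2.1).choose else 1 with hdddef
  have hdd_pos : ∀ q, 0 < dd q := by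
    intro q
    simp only [hdddef]
    split
    · exact ((hU q.1 q.2 (by assumption)).2.2.1).choose_spec.1.1
    · exact one_pos
  have hdd_zero : ∀ q : Fin N × Fin N, G.Adj q.1 q.2 → dd q * f q.1 q.2 (dd q) = 0 := by
    intro q h
    have : f q.1 q.2 (dd q) = 0 := by
      rw [hdddef]
      simp only [dif_pos h]
      exact ((hU q.1 q.2 h).2.2.1).choose_spec.1.2
    rw [this, mul_zero]
  set D : ℝ := P.sup' hPne' dd with hDdef
  have hD : 0 < D := lt_of_lt_of_le (hdd_pos hPne'.choose) (Finset.le_sup' dd hPne'.choose_spec)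
  set mR : ℝ := (Fintype.card (Fin N × Fin N) : ℝ) with hmRdef
  have hmR : 0 < mR := by
    rw [hmRdef]
    have : Nonempty (Fin N × Fin N) := ⟨hPne'.choose⟩
    exact_mod_cast Fintype.card_pos
  set R₂ : ℝ := mR ^ 2 * D with hR₂def
  have hR₂ : 0 < R₂ := by positivity
  set C₂ : ℝ := max (P.sup' hPne' (fun q => R₂ * f q.1 q.2 R₂)) 0 with hC₂def
  have hC₂0 : 0 ≤ C₂ := le_max_right _ _
  set C₀ : ℝ := mR * C₂ with hC₀def
  have hC₀0 : 0 ≤ C₀ := mul_nonneg hmR.le hC₂0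
  set A : ℝ := mR * (C₀ * D) with hAdef
  set cc : Fin N × Fin N → ℝ := fun q => (dd q + 1) * f q.1 q.2 (dd q + 1) with hccdef
  set M : ℝ := max (P.sup' hPne' (fun q => max (dd q + 1) (A / cc q))) D with hMdef
  have hMD : D ≤ M := le_max_right _ _
  refine ⟨C₀, M, hC₀0, lt_of_lt_of_le hD hMD, ?_⟩
  intro p hp hF i j hij
  -- notation
  set r : Fin N × Fin N → ℝ := fun q => ‖p q.1 - p q.2‖ with hrdef
  set w : Fin N × Fin N → ℝ := fun q => r q * f q.1 q.2 (r q) with hwdef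
  have hrpos : ∀ q ∈ P, 0 < r q := by
    intro q hq
    rw [hrdef]
    rw [norm_pos_iff, sub_ne_zero]
    exact hp q.1 q.2 ((hmemP q).mp hq)
  have hmonoq : ∀ q ∈ P, StrictMonoOn (fun t => t * f q.1 q.2 t) (Set.Ioi 0) :=
    fun q hq => memU_strictMono (hU q.1 q.2 ((hmemP q).mp hq))
  have hsign : ∀ q ∈ P, w q ≤ 0 → r q ≤ dd q := by
    intro q hq hw
    by_contra hcon
    push_neg at hcon
    have h2 := hmonoq q hq (Set.mem_Ioi.mpr (hdd_pos q)) (Set.mem_Ioi.mpr (hrpos q hq)) hcon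
    simp only [] at h2
    rw [hdd_zero q ((hmemP q).mp hq)] at h2
    rw [hwdef] at hw
    simp only [] at hw
    linarith
  set B : ℝ := max (P.sup' hPne' w) 0 with hBdef
  have hB0 : 0 ≤ B := le_max_right _ _
  have hBub : ∀ i' j', G.Adj i' j' → ‖p i' - p j'‖ * f i' j' ‖p i' - p j'‖ ≤ B := by
    intro i' j' h
    have : w (i', j') ≤ P.sup' hPne' w := Finset.le_sup' w ((hmemP (i', j')).mpr h)
    exact le_trans this (le_max_left _ _)
  have hHALF : ∀ q ∈ P, -(mR * B) ≤ w q := by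
    intro q hq
    have := HALF G f hsym hp hF B hB0 hBub ((hmemP q).mp hq)
    rw [hwdef, hrdef]
    exact this
  -- the IB-based bound on positive terms
  set cfun : Fin N × Fin N → ℝ := fun x => if G.Adj x.1 x.2 then w x * r x else 0 with hcfundef
  have hIB : ∑ x : Fin N × Fin N, cfun x = 0 := IB G f hsym hF
  have hQbound : ∀ C' : ℝ, 0 ≤ C' → (∀ q ∈ P, -C' ≤ w q) →
      ∀ q0 ∈ P, 0 < w q0 → w q0 * r q0 ≤ mR * (C' * D) := by
    intro C' hC' hlow q0 hq0 hw0
    set Pos : Finset (Fin N × Fin N) := Finset.univ.filter (fun x => 0 < cfun x) with hPosdef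
    have hq0Pos : q0 ∈ Pos := by
      rw [hPosdef, Finset.mem_filter]
      refine ⟨Finset.mem_univ _, ?_⟩
      rw [hcfundef]
      simp only [if_pos ((hmemP q0).mp hq0)]
      exact mul_pos hw0 (hrpos q0 hq0)
    have h1 : cfun q0 ≤ ∑ x ∈ Pos, cfun x := by
      apply Finset.single_le_sum (fun x hx => ?_) hq0Pos
      exact (Finset.mem_filter.mp hx).2.le
    have h2 : ∑ x ∈ Pos, cfun x + ∑ x ∈ Posᶜ, cfun x = 0 := by
      rw [Finset.sum_add_sum_compl]; exact hIB
    have h3 : ∀ x ∈ Posᶜ, -cfun x ≤ C' * D := by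
      intro x hx
      have hnpos : ¬ 0 < cfun x := by
        have := Finset.mem_compl.mp hx
        rw [hPosdef, Finset.mem_filter] at this
        push_neg at this
        exact not_lt.mpr (this (Finset.mem_univ x))
      by_cases hadj : G.Adj x.1 x.2
      · have hxP : x ∈ P := (hmemP x).mpr hadj
        have hcx : cfun x = w x * r x := by rw [hcfundef]; simp only [if_pos hadj]
        have hwx : w x ≤ 0 := by
          by_contra hcon
          push_neg at hcon
          exact hnpos (hcx ▸ mul_pos hcon (hrpos x hxP))
        have hrx : r x ≤ D := le_trans (hsign x hxP hwx)
          (le_trans (Finset.le_sup' dd hxP) (le_refl D))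
        rw [hcx, ← neg_mul]
        exact mul_le_mul (by linarith [hlow x hxP]) hrx (hrpos x hxP).le hC'
      · have : cfun x = 0 := by rw [hcfundef]; simp only [if_neg hadj]
        rw [this, neg_zero]
        exact mul_nonneg hC' hD.le
    have h4 : ∑ x ∈ Posᶜ, (-cfun x) ≤ (Posᶜ.card : ℝ) * (C' * D) := by
      have := Finset.sum_le_card_nsmul Posᶜ (fun x => -cfun x) (C' * D) h3
      rwa [nsmul_eq_mul] at this
    have h5 : (Posᶜ.card : ℝ) ≤ mR := by
      rw [hmRdef]
      exact_mod_cast Finset.card_le_univ _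
    have h6 : ∑ x ∈ Posᶜ, (-cfun x) ≤ mR * (C' * D) := by
      refine le_trans h4 (mul_le_mul_of_nonneg_right h5 (mul_nonneg hC' hD.le))
    have h7 : cfun q0 = w q0 * r q0 := by
      rw [hcfundef]; simp only [if_pos ((hmemP q0).mp hq0)]
    rw [Finset.sum_neg_distrib] at h6
    linarith
  -- B ≤ C₂
  have hBC₂ : B ≤ C₂ := by
    obtain ⟨qp, hqpP, hsup⟩ := Finset.exists_mem_eq_sup' hPne' w
    rcases le_or_gt (w qp) 0 with hle | hpos
    · have : B ≤ 0 := max_le (by rw [hsup]; exact hle) le_rfl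
      linarith
    · have hBw : B = w qp := by
        rw [hBdef, hsup]
        exact max_eq_left hpos.le
      have hq := hQbound (mR * B) (mul_nonneg hmR.le hB0) hHALF qp hqpP hpos
      have hrle : r qp ≤ R₂ := by
        rw [hBw] at hq
        rw [hR₂def]
        nlinarith [hrpos qp hqpP, hpos]
      have hwle : w qp ≤ R₂ * f qp.1 qp.2 R₂ := by
        rcases eq_or_lt_of_le hrle with heq | hlt
        · rw [hwdef]; simp only []; rw [heq]
        · have := hmonoq qp hqpP (Set.mem_Ioi.mpr (hrpos qp hqpP)) (Set.mem_Ioi.mpr hR₂) hlt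
          rw [hwdef]; exact this.le
      have : R₂ * f qp.1 qp.2 R₂ ≤ C₂ :=
        le_trans (Finset.le_sup' (fun q => R₂ * f q.1 q.2 R₂) hqpP) (le_max_left _ _)
      linarith [hBw ▸ (le_trans hwle this)]
  have hwlow : ∀ q ∈ P, -C₀ ≤ w q := by
    intro q hq
    have h1 : mR * B ≤ C₀ := by
      rw [hC₀def]
      exact mul_le_mul_of_nonneg_left hBC₂ hmR.le
    linarith [hHALF q hq]
  -- upper bound on r
  have hMub : ∀ q ∈ P, r q ≤ M := by
    intro q hq
    rcases le_or_gt (w q) 0 with hle | hpos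
    · exact le_trans (hsign q hq hle) (le_trans (Finset.le_sup' dd hq) hMD)
    · have hA : w q * r q ≤ A := by
        rw [hAdef]
        exact hQbound C₀ hC₀0 hwlow q hq hpos
      have hy : max (dd q + 1) (A / cc q) ≤ M :=
        le_trans (Finset.le_sup' (fun q => max (dd q + 1) (A / cc q)) hq) (le_max_left _ _)
      rcases le_or_gt (r q) (dd q + 1) with hle2 | hlt2
      · exact le_trans hle2 (le_trans (le_max_left _ _) hy)
      · have hcc : 0 < cc q := by
          have h0 := hmonoq q hq (Set.mem_Ioi.mpr (hdd_pos q))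
            (Set.mem_Ioi.mpr (by linarith [hdd_pos q])) (by linarith : dd q < dd q + 1)
          simp only [] at h0
          rw [hdd_zero q ((hmemP q).mp hq)] at h0
          rw [hccdef]
          exact h0
        have hwge : cc q ≤ w q := by
          have := hmonoq q hq (Set.mem_Ioi.mpr (by linarith [hdd_pos q] : (0:ℝ) < dd q + 1))
            (Set.mem_Ioi.mpr (hrpos q hq)) hlt2
          rw [hwdef, hccdef]
          exact this.le
        have h8 : cc q * r q ≤ A :=
          le_trans (mul_le_mul_of_nonneg_right hwge (hrpos q hq).le) hA
        have h9 : r q ≤ A / cc q := (le_div_iff₀ hcc).mpr (by linarith [h8])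
        exact le_trans h9 (le_trans (le_max_right _ _) hy)
  exact ⟨hwlow (i, j) ((hmemP (i, j)).mpr hij), hMub (i, j) ((hmemP (i, j)).mpr hij)⟩


lemma global (hsym : ∀ i j, f i j = f j i) (hU : ∀ i j, G.Adj i j → MemU (f i j))
    (hPne : ∃ a b : Fin N, G.Adj a b) :
    ∃ ε M : ℝ, 0 < ε ∧ 0 < M ∧
      ∀ p ∈ ConfigSpace G, formationField G.Adj f p = 0 →
      ∀ i j, G.Adj i j → ε ≤ ‖p i - p j‖ ∧ ‖p i - p j‖ ≤ M := by
  classical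
  obtain ⟨C₀, M, hC₀0, hM, hmain⟩ := bounds G f hsym hU hPne
  set P : Finset (Fin N × Fin N) := Finset.univ.filter (fun q => G.Adj q.1 q.2) with hPdef
  have hmemP : ∀ q : Fin N × Fin N, q ∈ P ↔ G.Adj q.1 q.2 := by
    intro q; rw [hPdef, Finset.mem_filter]; simp
  have hPne' : P.Nonempty := by
    obtain ⟨a, b, hab⟩ := hPne
    exact ⟨(a, b), (hmemP (a, b)).mpr hab⟩
  have hex : ∀ q : Fin N × Fin N, ∃ e : ℝ, 0 < e ∧ (G.Adj q.1 q.2 → e * f q.1 q.2 e < -C₀) := by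
    intro q
    by_cases h : G.Adj q.1 q.2
    · obtain ⟨x, hx, hlt⟩ := memU_exists_small (hU _ _ h) (-C₀)
      exact ⟨x, hx, fun _ => hlt⟩
    · exact ⟨1, one_pos, fun h' => absurd h' h⟩
  choose εv hεv1 hεv2 using hex
  refine ⟨P.inf' hPne' εv, M, ?_, hM, ?_⟩
  · obtain ⟨q0, _, heq⟩ := Finset.exists_mem_eq_inf' hPne' εv
    rw [heq]; exact hεv1 q0
  · intro p hp hF i j hij
    refine ⟨?_, (hmain p hp hF i j hij).2⟩
    have hb := (hmain p hp hF i j hij).1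
    have hrpos : 0 < ‖p i - p j‖ := by
      rw [norm_pos_iff, sub_ne_zero]; exact hp i j hij
    have hepos := hεv1 (i, j)
    have hlt : εv (i, j) * f i j (εv (i, j)) < -C₀ := hεv2 (i, j) hij
    have h1 : εv (i, j) < ‖p i - p j‖ := by
      by_contra hcon
      push_neg at hcon
      have hmono := (memU_strictMono (hU i j hij)).monotoneOn
      have := hmono (Set.mem_Ioi.mpr hrpos) (Set.mem_Ioi.mpr hepos) hcon
      simp only [] at this
      linarith
    exact le_trans (Finset.inf'_le εv ((hmemP (i, j)).mpr hij)) h1.le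

end FCAux



theorem stmt_5 {N : ℕ} (G : SimpleGraph (Fin N)) (hconn : G.Connected)
    (f : Fin N → Fin N → ℝ → ℝ) (hsym : ∀ i j, f i j = f j i)
    (hU : ∀ i j, G.Adj i j → MemU (f i j)) :
    IsCompact {p : Config (Fin N) | p ∈ ConfigSpace G ∧ formationField G.Adj f p = 0 ∧
      ∑ i, p i = 0} ∧
    Bornology.IsBounded {p : Config (Fin N) | p ∈ ConfigSpace G ∧
      formationField G.Adj f p = 0 ∧ ∑ i, p i = 0} ∧
    ∃ ε > (0:ℝ), ∀ p : Config (Fin N),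
      p ∈ ConfigSpace G → formationField G.Adj f p = 0 → ∑ i, p i = 0 →
      ∀ i j, G.Adj i j → ε ≤ dist (p i) (p j) := by
  classical
  rcases Nat.lt_or_ge N 2 with hN | hN
  · -- degenerate case : N ≤ 1, no edges possible
    haveI hss : Subsingleton (Fin N) := by
      constructor
      intro a b
      have := a.isLt; have := b.isLt
      apply Fin.ext
      omega
    have hnoadj : ∀ i j : Fin N, ¬ G.Adj i j := by
      intro i j hij
      have : i = j := Subsingleton.elim i j
      rw [this] at hij
      exact G.irrefl hij
    have hN01 : N = 0 ∨ N = 1 := by omega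
    have hsub : {p : Config (Fin N) | p ∈ ConfigSpace G ∧ formationField G.Adj f p = 0 ∧
        ∑ i, p i = 0} ⊆ {0} := by
      intro p hp
      obtain ⟨hp1, hp2, hp3⟩ := hp
      have hp0 : p = 0 := by
        rcases hN01 with h0 | h1
        · subst h0
          apply PiLp.ext; intro i
          exact i.elim0
        · subst h1
          rw [Fin.sum_univ_one] at hp3
          apply PiLp.ext; intro i
          rw [Subsingleton.elim i 0]
          simpa using hp3
      rw [hp0]; rfl
    have hfin : Set.Finite {p : Config (Fin N) | p ∈ ConfigSpace G ∧
        formationField G.Adj f p = 0 ∧ ∑ i, p i = 0} :=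
      Set.Finite.subset (Set.finite_singleton 0) hsub
    exact ⟨hfin.isCompact, hfin.isBounded,
      1, one_pos, fun p _ _ _ i j hij => absurd hij (hnoadj i j)⟩
  · -- main case : N ≥ 2
    have hPne : ∃ a b : Fin N, G.Adj a b := by
      have h01 : (⟨0, by omega⟩ : Fin N) ≠ (⟨1, by omega⟩ : Fin N) := by
        intro h
        have := Fin.mk.inj_iff.mp h
        omega
      obtain ⟨wk⟩ := hconn.preconnected ⟨0, by omega⟩ ⟨1, by omega⟩
      cases wk with
      | cons h' _ => exact ⟨_, _, h'⟩
    obtain ⟨ε, M, hε, hM, hbound⟩ := FCAux.global G f hsym hU hPne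
    -- distance between any two vertices bounded via connectivity
    have hpath : ∀ p ∈ ConfigSpace G, formationField G.Adj f p = 0 →
        ∀ i j : Fin N, ‖p i - p j‖ ≤ (N : ℝ) * M := by
      intro p hp hF i j
      have hwalkbound : ∀ (i' j' : Fin N) (w : G.Walk i' j'),
          ‖p i' - p j'‖ ≤ (w.length : ℝ) * M := by
        intro i' j' w
        induction w with
        | nil => simp
        | cons h' w' ih =>
          rename_i a b c
          have h1 : ‖p a - p c‖ ≤ ‖p a - p b‖ + ‖p b - p c‖ := by
            have : p a - p c = (p a - p b) + (p b - p c) := by abel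
            rw [this]; exact norm_add_le _ _
          have h2 := (hbound p hp hF a b h').2
          simp only [SimpleGraph.Walk.length_cons]
          push_cast
          linarith
      obtain ⟨wk⟩ := hconn.preconnected i j
      have hlen : (wk.bypass.length : ℝ) ≤ (N : ℝ) := by
        have := wk.bypass_isPath.length_lt
        rw [Fintype.card_fin] at this
        exact_mod_cast this.le
      calc ‖p i - p j‖ ≤ (wk.bypass.length : ℝ) * M := hwalkbound i j wk.bypass
        _ ≤ (N : ℝ) * M := mul_le_mul_of_nonneg_right hlen hM.le
    -- coordinates bounded
    have hcoord : ∀ p ∈ ConfigSpace G, formationField G.Adj f p = 0 → (∑ i, p i = 0) →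
        ∀ i, ‖p i‖ ≤ (N : ℝ) * M := by
      intro p hp hF hs i
      have h1 : (N : ℝ) • p i = ∑ j, (p i - p j) := by
        rw [Finset.sum_sub_distrib, hs, sub_zero, Finset.sum_const, Finset.card_univ,
          Fintype.card_fin, Nat.cast_smul_eq_nsmul]
      have h2 : ‖∑ j : Fin N, (p i - p j)‖ ≤ (N:ℝ) * ((N:ℝ) * M) := by
        refine le_trans (norm_sum_le _ _) ?_
        calc ∑ j : Fin N, ‖p i - p j‖ ≤ ∑ _j : Fin N, (N:ℝ) * M :=
              Finset.sum_le_sum fun j _ => hpath p hp hF i j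
          _ = (N:ℝ) * ((N:ℝ) * M) := by simp [mul_comm]
      have hN0 : (0:ℝ) < N := by
        have : 0 < N := by omega
        exact_mod_cast this
      rw [← h1, norm_smul, Real.norm_eq_abs, abs_of_pos hN0] at h2
      exact (mul_le_mul_iff_right₀ hN0).mp h2
    -- norm bound
    set R : ℝ := ((N:ℝ) * ((N:ℝ) * M) ^ (2:ℝ)) ^ ((1:ℝ)/2) with hRdef
    have hnormb : ∀ p ∈ ConfigSpace G, formationField G.Adj f p = 0 → (∑ i, p i = 0) →
        ‖p‖ ≤ R := by
      intro p hp hF hs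
      rw [PiLp.norm_eq_sum (p := 2) (by norm_num) p]
      rw [hRdef]
      norm_num
      apply Real.rpow_le_rpow (by positivity) ?_ (by norm_num)
      have hsumle : ∑ i : Fin N, ‖p i‖ ^ (2:ℝ) ≤ ∑ _i : Fin N, ((N:ℝ) * M) ^ (2:ℝ) := by
        apply Finset.sum_le_sum
        intro i _
        exact Real.rpow_le_rpow (norm_nonneg _) (hcoord p hp hF hs i) (by norm_num)
      simpa using hsumle
    have hbounded : Bornology.IsBounded {p : Config (Fin N) | p ∈ ConfigSpace G ∧
        formationField G.Adj f p = 0 ∧ ∑ i, p i = 0} := by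
      rw [isBounded_iff_forall_norm_le]
      exact ⟨R, fun p hp => hnormb p hp.1 hp.2.1 hp.2.2⟩
    -- closedness
    set B₀ : Set (Config (Fin N)) := {q | ∀ i j, G.Adj i j → ε ≤ ‖q i - q j‖} with hB₀def
    have hB₀c : IsClosed B₀ := by
      have heq : B₀ = ⋂ i, ⋂ j, ⋂ (_ : G.Adj i j), {q : Config (Fin N) | ε ≤ ‖q i - q j‖} := by
        ext q; simp [hB₀def, Set.mem_iInter]
      rw [heq]
      exact isClosed_iInter fun i => isClosed_iInter fun j => isClosed_iInter fun _ =>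
        isClosed_le continuous_const ((((PiLp.continuous_apply 2 (fun _ : Fin N => Plane) i).sub (PiLp.continuous_apply 2 (fun _ : Fin N => Plane) j)).norm))
    have hZc : IsClosed {q : Config (Fin N) | ∑ i, q i = 0} :=
      isClosed_eq (continuous_finset_sum _ fun i _ => (PiLp.continuous_apply 2 (fun _ : Fin N => Plane) i)) continuous_const
    have hFcont : ContinuousOn (formationField G.Adj f) B₀ := by
      intro x hx
      apply ContinuousWithinAt.mono ?_ (le_refl B₀ : B₀ ⊆ B₀)
      apply (PiLp.continuous_toLp 2 (fun _ : Fin N => Plane)).continuousAt.comp_continuousWithinAt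
        (f := fun q v => formationField G.Adj f q v)
      apply continuousWithinAt_pi.mpr
      intro v
      have hcomp : ContinuousOn (fun q : Config (Fin N) => formationField G.Adj f q v) B₀ := by
        unfold formationField
        simp only [PiLp.toLp_apply]
        apply continuousOn_finset_sum
        intro u _
        by_cases h : G.Adj v u
        · simp only [if_pos h]
          apply ContinuousOn.smul (f := fun a : Config (Fin N) => f v u ‖a v - a u‖)
            (g := fun a : Config (Fin N) => a u - a v)
          · apply ContinuousOn.comp (hU v u h).1.continuousOn
            · exact (((PiLp.continuous_apply 2 (fun _ : Fin N => Plane) v).sub (PiLp.continuous_apply 2 (fun _ : Fin N => Plane) u)).norm).continuousOn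
            · intro q hq
              exact Set.mem_Ioi.mpr (lt_of_lt_of_le hε (hq v u h))
          · exact ((PiLp.continuous_apply 2 (fun _ : Fin N => Plane) u).sub (PiLp.continuous_apply 2 (fun _ : Fin N => Plane) v)).continuousOn
        · simp only [if_neg h]
          exact continuousOn_const
      exact hcomp x hx
    have hAeq : {p : Config (Fin N) | p ∈ ConfigSpace G ∧ formationField G.Adj f p = 0 ∧
        ∑ i, p i = 0}
        = (B₀ ∩ {q : Config (Fin N) | ∑ i, q i = 0}) ∩ (formationField G.Adj f) ⁻¹' {0} := by
      ext p
      constructor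
      · rintro ⟨h1, h2, h3⟩
        refine ⟨⟨fun i j hij => (hbound p h1 h2 i j hij).1, h3⟩, ?_⟩
        simpa using h2
      · rintro ⟨⟨hb, hz⟩, hf0⟩
        refine ⟨fun i j hij hpij => ?_, by simpa using hf0, hz⟩
        have := hb i j hij
        rw [hpij, sub_self, norm_zero] at this
        linarith
    have hclosed : IsClosed {p : Config (Fin N) | p ∈ ConfigSpace G ∧
        formationField G.Adj f p = 0 ∧ ∑ i, p i = 0} := by
      rw [hAeq]
      exact ContinuousOn.preimage_isClosed_of_isClosed
        (hFcont.mono Set.inter_subset_left) (hB₀c.inter hZc) isClosed_singleton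
    have hcomp : IsCompact {p : Config (Fin N) | p ∈ ConfigSpace G ∧
        formationField G.Adj f p = 0 ∧ ∑ i, p i = 0} :=
      Metric.isCompact_of_isClosed_isBounded hclosed hbounded
    refine ⟨hcomp, hbounded, ε, hε, ?_⟩
    intro p hp hF _ i j hij
    rw [dist_eq_norm]
    exact (hbound p hp hF i j hij).1

end
end

section
/- Suppose each f_ij belongs to 𝒰. Then for every initial condition p(0) ∈ P_G, the solution t ↦ p(t) of the formation control system ṗ = F(p) exists for all t ≥ 0, remains in P_G for all t ≥ 0, and converges to the set of equilibria: dist(p(t), {q ∈ P_G : F(q) = 0}) → 0 as t → ∞. -/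
open scoped BigOperators
open scoped Classical

noncomputable section

open Filter MeasureTheory

open Set Filter MeasureTheory Metric
open scoped Topology

set_option maxHeartbeats 1000000
set_option synthInstance.maxHeartbeats 400000

section HelperSection

def instContinuousSMulConfig {ι : Type} [Fintype ι] : ContinuousSMul ℝ (Config ι) :=
  inferInstance

attribute [local instance] instContinuousSMulConfig

variable {φ : ℝ → ℝ}

def Vint (φ : ℝ → ℝ) (r : ℝ) : ℝ := ∫ t in (1:ℝ)..r, t * φ t

variable {φ : ℝ → ℝ}

lemma memU_contOn (hφ : MemU φ) : ContinuousOn (fun t => t * φ t) (Ioi 0) :=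
  (continuousOn_id).mul (hφ.1.continuousOn)

lemma memU_integrable (hφ : MemU φ) {a b : ℝ} (ha : 0 < a) (hb : 0 < b) :
    IntervalIntegrable (fun t => t * φ t) volume a b := by
  apply ((memU_contOn hφ).mono (fun t ht => lt_of_lt_of_le (lt_min ha hb) ht.1)).intervalIntegrable

lemma memU_hasDerivAt_V (hφ : MemU φ) {r : ℝ} (hr : 0 < r) :
    HasDerivAt (Vint φ) (r * φ r) r := by
  apply intervalIntegral.integral_hasDerivAt_right (memU_integrable hφ one_pos hr)
  · exact (ContinuousOn.stronglyMeasurableAtFilter isOpen_Ioi (memU_contOn hφ)) r hr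
  · exact (memU_contOn hφ).continuousAt (Ioi_mem_nhds hr)

lemma memU_strictMonoOn (hφ : MemU φ) : StrictMonoOn (fun t => t * φ t) (Ioi 0) := by
  apply strictMonoOn_of_deriv_pos (convex_Ioi 0) (memU_contOn hφ)
  intro x hx
  rw [interior_Ioi] at hx
  exact hφ.2.1 x hx

lemma memU_exists_min (hφ : MemU φ) : ∃ m, ∀ r, 0 < r → m ≤ Vint φ r := by
  obtain ⟨d, ⟨hd, hfd⟩, -⟩ := hφ.2.2.1
  have hgd : d * φ d = 0 := by rw [hfd, mul_zero]
  have hnn : ∀ t ∈ Icc d (d + 1000), True := fun _ _ => trivial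
  refine ⟨Vint φ d, fun r hr => ?_⟩
  rcases le_or_gt d r with h | h
  · have key : Vint φ d + (∫ t in d..r, t * φ t) = Vint φ r :=
      intervalIntegral.integral_add_adjacent_intervals
        (memU_integrable hφ one_pos hd) (memU_integrable hφ hd hr)
    have : 0 ≤ ∫ t in d..r, t * φ t := by
      apply intervalIntegral.integral_nonneg h
      intro u hu
      rcases eq_or_lt_of_le hu.1 with h1 | h1
      · rw [← h1, hgd]
      · exact le_of_lt (hgd ▸ memU_strictMonoOn hφ hd (lt_trans hd h1) h1)
    linarith [key]
  · have key : Vint φ r + (∫ t in r..d, t * φ t) = Vint φ d :=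
      intervalIntegral.integral_add_adjacent_intervals
        (memU_integrable hφ one_pos hr) (memU_integrable hφ hr hd)
    have : (∫ t in r..d, t * φ t) ≤ 0 := by
      rw [← neg_nonneg, ← intervalIntegral.integral_neg]
      apply intervalIntegral.integral_nonneg h.le
      intro u hu
      simp only [neg_nonneg]
      rcases eq_or_lt_of_le hu.2 with h1 | h1
      · rw [h1, hgd]
      · exact le_of_lt (hgd ▸ memU_strictMonoOn hφ (lt_of_lt_of_le hr hu.1) hd h1)
    linarith [key]

lemma memU_tendsto_top (hφ : MemU φ) : Tendsto (Vint φ) atTop atTop := by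
  obtain ⟨d, ⟨hd, hfd⟩, -⟩ := hφ.2.2.1
  have hgd : d * φ d = 0 := by rw [hfd, mul_zero]
  set c := (d+1) * φ (d+1) with hc
  have hcpos : 0 < c := by
    have h2 := memU_strictMonoOn hφ (show d ∈ Ioi (0:ℝ) from hd)
      (show d + 1 ∈ Ioi (0:ℝ) by simp [mem_Ioi]; linarith) (by linarith)
    simp only at h2
    rw [hgd] at h2
    exact h2
  apply tendsto_atTop_mono' _ (_ : ∀ᶠ r in atTop, Vint φ (d+1) + (r - (d+1)) * c ≤ Vint φ r)
  · apply tendsto_atTop_add_const_left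
    exact Tendsto.atTop_mul_const hcpos (tendsto_atTop_add_const_right _ _ tendsto_id)
  · filter_upwards [eventually_ge_atTop (d+1)] with r hr
    have key : Vint φ (d+1) + (∫ t in (d+1)..r, t * φ t) = Vint φ r :=
      intervalIntegral.integral_add_adjacent_intervals
        (memU_integrable hφ one_pos (by linarith)) (memU_integrable hφ (by linarith) (by linarith))
    have hmono : (∫ t in (d+1)..r, (fun _ => c) t) ≤ ∫ t in (d+1)..r, t * φ t := by
      apply intervalIntegral.integral_mono_on hr (intervalIntegrable_const)
        (memU_integrable hφ (by linarith) (by linarith))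
      intro u hu
      rcases eq_or_lt_of_le hu.1 with h1 | h1
      · rw [← h1]
      · have h2 := memU_strictMonoOn hφ (show d + 1 ∈ Ioi (0:ℝ) from by
          simp only [mem_Ioi]; linarith) (show u ∈ Ioi (0:ℝ) from by
          simp only [mem_Ioi]; linarith) h1
        simp only at h2
        exact le_of_lt h2
    rw [intervalIntegral.integral_const, smul_eq_mul] at hmono
    linarith [key]

lemma memU_tendsto_zero (hφ : MemU φ) : Tendsto (Vint φ) (nhdsWithin 0 (Ioi 0)) atTop := by
  have : Vint φ = fun x => -∫ t in x..(1:ℝ), t * φ t := by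
    funext x; rw [Vint, intervalIntegral.integral_symm]
  rw [this]
  exact tendsto_neg_atBot_atTop.comp hφ.2.2.2

lemma memU_bounds (hφ : MemU φ) (c : ℝ) :
    ∃ δ M : ℝ, 0 < δ ∧ ∀ r, 0 < r → Vint φ r ≤ c → δ ≤ r ∧ r ≤ M := by
  have h0 := (memU_tendsto_zero hφ).eventually (eventually_gt_atTop c)
  rw [eventually_nhdsWithin_iff, Metric.eventually_nhds_iff] at h0
  obtain ⟨δ, hδ, hδ'⟩ := h0
  have h1 := (memU_tendsto_top hφ).eventually (eventually_gt_atTop c)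
  obtain ⟨M, hM⟩ := h1.exists_forall_of_atTop
  refine ⟨δ, M, hδ, fun r hr hVr => ⟨?_, ?_⟩⟩
  · by_contra h
    push_neg at h
    exact absurd hVr (not_le.mpr (hδ' (by simpa [abs_of_pos hr] using h) hr))
  · by_contra h
    push_neg at h
    exact absurd hVr (not_le.mpr (hM r h.le))

def Wfun (φ : ℝ → ℝ) (s : ℝ) : ℝ := Vint φ (Real.sqrt s)

lemma memU_hasDerivAt_W (hφ : MemU φ) {s : ℝ} (hs : 0 < s) :
    HasDerivAt (Wfun φ) (φ (Real.sqrt s) / 2) s := by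
  have hsq : 0 < Real.sqrt s := Real.sqrt_pos.mpr hs
  have h1 := (memU_hasDerivAt_V hφ hsq).comp s (Real.hasDerivAt_sqrt hs.ne')
  refine h1.congr_deriv ?_
  field_simp

variable {N : ℕ} {G : SimpleGraph (Fin N)} {f : Fin N → Fin N → ℝ → ℝ}

def Phi (G : SimpleGraph (Fin N)) (f : Fin N → Fin N → ℝ → ℝ) (q : Config (Fin N)) : ℝ :=
  (1/2) * ∑ i, ∑ j, if G.Adj i j then Wfun (f i j) (‖q i - q j‖^2) else 0

def projCLM {ι : Type} [Fintype ι] (i : ι) : Config ι →L[ℝ] Plane :=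
  (ContinuousLinearMap.proj i).comp (PiLp.continuousLinearEquiv 2 ℝ _).toContinuousLinearMap

@[simp] lemma projCLM_apply {ι : Type} [Fintype ι] (i : ι) (q : Config ι) :
    projCLM i q = q i := rfl

lemma isOpen_configSpace : IsOpen (ConfigSpace G) := by
  have h : ConfigSpace G = ⋂ (i) (j), {q : Config (Fin N) | G.Adj i j → q i ≠ q j} := by
    ext q; simp [ConfigSpace, Set.mem_iInter]
  rw [h]
  apply isOpen_iInter_of_finite; intro i
  apply isOpen_iInter_of_finite; intro j
  by_cases hij : G.Adj i j
  · have : {q : Config (Fin N) | G.Adj i j → q i ≠ q j}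
        = (fun q : Config (Fin N) => (projCLM i - projCLM j) q) ⁻¹' ({0}ᶜ) := by
      ext q
      simp [hij, sub_ne_zero, sub_eq_zero]
    rw [this]
    exact (isOpen_compl_singleton).preimage (projCLM i - projCLM j).continuous
  · have : {q : Config (Fin N) | G.Adj i j → q i ≠ q j} = univ := by
      ext q; simp [hij]
    rw [this]; exact isOpen_univ

lemma contDiffAt_F (hU : ∀ i j, G.Adj i j → MemU (f i j)) {p : Config (Fin N)}
    (hp : p ∈ ConfigSpace G) : ContDiffAt ℝ 1 (formationField G.Adj f) p := by
  have hrepr : formationField G.Adj f =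
      (PiLp.continuousLinearEquiv 2 ℝ fun _ : Fin N => Plane).symm ∘
      (fun q v => ∑ u, if G.Adj v u then f v u ‖q v - q u‖ • (q u - q v) else 0) := rfl
  rw [hrepr]
  have hpi : ContDiffAt ℝ 1
      (fun (q : Config (Fin N)) (v : Fin N) =>
        ∑ u, if G.Adj v u then f v u ‖q v - q u‖ • (q u - q v) else 0) p := by
    rw [contDiffAt_pi]
    intro v
    apply ContDiffAt.sum; intro u _
    by_cases h : G.Adj v u
    · simp only [if_pos h]
      have hne : p v - p u ≠ 0 := sub_ne_zero.mpr (hp v u h)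
      refine ContDiffAt.smul (f := fun x : Config (Fin N) => f v u ‖x v - x u‖)
        (g := fun x : Config (Fin N) => x u - x v) ?_ ?_
      · have h2 : ContDiffAt ℝ 1 (fun q : Config (Fin N) => ‖q v - q u‖) p := by
          have := (contDiffAt_norm ℝ (n := 1) hne).comp p
            ((projCLM v - projCLM u).contDiff.contDiffAt (x := p))
          exact this
        have h1 : ContDiffAt ℝ 1 (f v u) ‖p v - p u‖ :=
          (hU v u h).1.contDiffAt (Ioi_mem_nhds (norm_pos_iff.mpr hne))
        exact h1.comp p h2
      · exact ((projCLM u - projCLM v).contDiff.contDiffAt).congr_of_eventuallyEq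
          (Filter.Eventually.of_forall (fun q => by simp))
    · simp only [if_neg h]
      exact contDiffAt_const
  exact ContDiffAt.comp p
    ((PiLp.continuousLinearEquiv 2 ℝ fun _ : Fin N => Plane).symm.contDiff.contDiffAt) hpi

lemma sum_F_eq_zero (hsym : ∀ i j, f i j = f j i) (q : Config (Fin N)) (S : Finset (Fin N))
    (hS : ∀ i ∈ S, ∀ j, G.Adj i j → j ∈ S) :
    ∑ i ∈ S, formationField G.Adj f q i = 0 := by
  have hrw : ∀ i ∈ S, formationField G.Adj f q i
      = ∑ j ∈ S, (if G.Adj i j then f i j ‖q i - q j‖ • (q j - q i) else 0) := by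
    intro i hi
    rw [formationField]
    exact (Finset.sum_subset (Finset.subset_univ S) (fun j _ hj => by
      rw [if_neg (fun hadj => hj (hS i hi j hadj))])).symm
  rw [Finset.sum_congr rfl hrw]
  set X := ∑ i ∈ S, ∑ j ∈ S, (if G.Adj i j then f i j ‖q i - q j‖ • (q j - q i) else 0) with hX
  have hswap : X = ∑ i ∈ S, ∑ j ∈ S, (if G.Adj j i then f j i ‖q j - q i‖ • (q i - q j) else 0) := by
    rw [hX, Finset.sum_comm]
  have hneg : X = -X := by
    nth_rewrite 2 [hswap]
    rw [← Finset.sum_neg_distrib]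
    apply Finset.sum_congr rfl; intro i _
    rw [← Finset.sum_neg_distrib]
    apply Finset.sum_congr rfl; intro j _
    by_cases h : G.Adj i j
    · rw [if_pos h, if_pos (G.adj_symm h), hsym j i, norm_sub_rev (q j), ← smul_neg, neg_sub]
    · rw [if_neg h, if_neg (fun h' => h (G.adj_symm h')), neg_zero]
  have h2 : (2:ℝ) • X = 0 := by
    rw [two_smul]
    nth_rewrite 1 [hneg]
    exact neg_add_cancel X
  exact (smul_eq_zero.mp h2).resolve_left two_ne_zero

lemma sum_inner_F (hsym : ∀ i j, f i j = f j i) (q : Config (Fin N)) :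
    (1/2) * ∑ i, ∑ j, (if G.Adj i j then
        f i j ‖q i - q j‖ * (inner ℝ (q i - q j)
          (formationField G.Adj f q i - formationField G.Adj f q j) : ℝ) else 0)
      = - ‖formationField G.Adj f q‖ ^ 2 := by
  set w := formationField G.Adj f q with hw
  set A := ∑ i, ∑ j, (if G.Adj i j then f i j ‖q i - q j‖ * (inner ℝ (q i - q j) (w i) : ℝ) else 0)
    with hA
  have hsplit : ∑ i, ∑ j, (if G.Adj i j then
      f i j ‖q i - q j‖ * (inner ℝ (q i - q j) (w i - w j) : ℝ) else 0) = A + A := by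
    have hB : ∑ i, ∑ j, (if G.Adj i j then
        f i j ‖q i - q j‖ * (inner ℝ (q i - q j) (w j) : ℝ) else 0) = -A := by
      rw [Finset.sum_comm]
      rw [hA, ← Finset.sum_neg_distrib]
      apply Finset.sum_congr rfl; intro i _
      rw [← Finset.sum_neg_distrib]
      apply Finset.sum_congr rfl; intro j _
      by_cases h : G.Adj i j
      · rw [if_pos (G.adj_symm h), if_pos h, hsym j i, norm_sub_rev (q j)]
        rw [show q j - q i = -(q i - q j) from (neg_sub _ _).symm, inner_neg_left]
        ring
      · rw [if_neg (fun h' => h (G.adj_symm h')), if_neg h, neg_zero]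
    calc ∑ i, ∑ j, (if G.Adj i j then
        f i j ‖q i - q j‖ * (inner ℝ (q i - q j) (w i - w j) : ℝ) else 0)
        = ∑ i, ∑ j, ((if G.Adj i j then f i j ‖q i - q j‖ * (inner ℝ (q i - q j) (w i) : ℝ) else 0)
          - (if G.Adj i j then f i j ‖q i - q j‖ * (inner ℝ (q i - q j) (w j) : ℝ) else 0)) := by
          apply Finset.sum_congr rfl; intro i _
          apply Finset.sum_congr rfl; intro j _
          by_cases h : G.Adj i j
          · rw [if_pos h, if_pos h, if_pos h, inner_sub_right]; ring
          · simp [h]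
      _ = A - (-A) := by
          simp only [Finset.sum_sub_distrib]
          rw [hB, ← hA]
      _ = A + A := by ring
  rw [hsplit]
  have hAval : A = - ‖w‖ ^ 2 := by
    have hrow : ∀ i : Fin N,
        ∑ j, (if G.Adj i j then f i j ‖q i - q j‖ * (inner ℝ (q i - q j) (w i) : ℝ) else 0)
        = - (inner ℝ (w i) (w i) : ℝ) := by
      intro i
      have hterm : ∀ j, (if G.Adj i j then f i j ‖q i - q j‖ * (inner ℝ (q i - q j) (w i) : ℝ) else 0)
          = -(inner ℝ ((if G.Adj i j then f i j ‖q i - q j‖ • (q j - q i) else 0)) (w i) : ℝ) := by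
        intro j
        by_cases h : G.Adj i j
        · rw [if_pos h, if_pos h, real_inner_smul_left]
          rw [show q j - q i = -(q i - q j) from (neg_sub _ _).symm, inner_neg_left]
          ring
        · simp [h]
      rw [Finset.sum_congr rfl (fun j _ => hterm j), Finset.sum_neg_distrib, ← sum_inner]
      have hFi : (∑ j, (if G.Adj i j then f i j ‖q i - q j‖ • (q j - q i) else 0)) = w i := rfl
      rw [hFi]
    rw [hA, Finset.sum_congr rfl (fun i _ => hrow i), Finset.sum_neg_distrib]
    rw [← PiLp.inner_apply, real_inner_self_eq_norm_sq]
  rw [hAval]; ring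

lemma coord_hasDerivWithinAt {g : ℝ → Config (Fin N)} {w : Config (Fin N)} {s : Set ℝ} {t : ℝ}
    (hg : HasDerivWithinAt g w s t) (i : Fin N) :
    HasDerivWithinAt (fun u => g u i) (w i) s t :=
  (projCLM i).hasFDerivAt.comp_hasDerivWithinAt t hg

lemma edge_hasDerivWithinAt (hφ : MemU φ) {g : ℝ → Config (Fin N)} {w : Config (Fin N)}
    {s : Set ℝ} {t : ℝ} (hg : HasDerivWithinAt g w s t) {i j : Fin N}
    (hne : g t i ≠ g t j) :
    HasDerivWithinAt (fun u => Wfun φ (‖g u i - g u j‖^2))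
      (φ ‖g t i - g t j‖ * (inner ℝ (g t i - g t j) (w i - w j) : ℝ)) s t := by
  have hd : HasDerivWithinAt (fun u => g u i - g u j) (w i - w j) s t :=
    (coord_hasDerivWithinAt hg i).sub (coord_hasDerivWithinAt hg j)
  have hinner := HasDerivWithinAt.inner ℝ hd hd
  have hnorm : HasDerivWithinAt (fun u => ‖g u i - g u j‖^2)
      ((inner ℝ (g t i - g t j) (w i - w j) : ℝ) + inner ℝ (w i - w j) (g t i - g t j)) s t := by
    apply hinner.congr (fun u _ => (real_inner_self_eq_norm_sq _).symm)
      ((real_inner_self_eq_norm_sq _).symm)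
  have hpos : (0:ℝ) < ‖g t i - g t j‖^2 := by
    have := norm_pos_iff.mpr (sub_ne_zero.mpr hne)
    positivity
  have hcomp := (memU_hasDerivAt_W hφ hpos).comp_hasDerivWithinAt t hnorm
  refine hcomp.congr_deriv ?_
  rw [Real.sqrt_sq (norm_nonneg _), real_inner_comm (w i - w j)]
  ring

lemma phi_hasDerivWithinAt (hU : ∀ i j, G.Adj i j → MemU (f i j))
    (hsym : ∀ i j, f i j = f j i) {g : ℝ → Config (Fin N)} {s : Set ℝ} {t : ℝ}
    (hcs : g t ∈ ConfigSpace G)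
    (hg : HasDerivWithinAt g (formationField G.Adj f (g t)) s t) :
    HasDerivWithinAt (fun u => Phi G f (g u))
      (-‖formationField G.Adj f (g t)‖^2) s t := by
  have hterm : ∀ i j : Fin N, HasDerivWithinAt
      (fun u => if G.Adj i j then Wfun (f i j) (‖g u i - g u j‖^2) else 0)
      (if G.Adj i j then f i j ‖g t i - g t j‖ *
        (inner ℝ (g t i - g t j) (formationField G.Adj f (g t) i
          - formationField G.Adj f (g t) j) : ℝ) else 0) s t := by
    intro i j
    by_cases h : G.Adj i j
    · simp only [if_pos h]
      exact edge_hasDerivWithinAt (hU i j h) hg (hcs i j h)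
    · simp only [if_neg h]
      exact hasDerivWithinAt_const t s 0
  have hsum := HasDerivWithinAt.sum
    (fun i (_ : i ∈ Finset.univ) => HasDerivWithinAt.sum
      (fun j (_ : j ∈ Finset.univ) => hterm i j))
  have hmul := hsum.const_mul (1/2 : ℝ)
  rw [sum_inner_F hsym (g t)] at hmul
  simp only [Finset.sum_fn] at hmul
  exact hmul

lemma compsum_hasDerivWithinAt (hsym : ∀ i j, f i j = f j i)
    {g : ℝ → Config (Fin N)} {s : Set ℝ} {t : ℝ} (S : Finset (Fin N))
    (hS : ∀ i ∈ S, ∀ j, G.Adj i j → j ∈ S)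
    (hg : HasDerivWithinAt g (formationField G.Adj f (g t)) s t) :
    HasDerivWithinAt (fun u => ∑ i ∈ S, g u i) (0 : Plane) s t := by
  have h := HasDerivWithinAt.sum
    (fun i (_ : i ∈ S) => coord_hasDerivWithinAt hg i)
  rw [sum_F_eq_zero hsym (g t) S hS] at h
  simp only [Finset.sum_fn] at h
  exact h

lemma wfun_eq_vint (φ : ℝ → ℝ) (x : Plane) : Wfun φ (‖x‖^2) = Vint φ ‖x‖ := by
  rw [Wfun, Real.sqrt_sq (norm_nonneg _)]

lemma phi_bddBelow (hU : ∀ i j, G.Adj i j → MemU (f i j)) :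
    ∃ lb, ∀ q ∈ ConfigSpace G, lb ≤ Phi G f q := by
  have hmv : ∀ a b : Fin N, ∃ m, G.Adj a b → ∀ r, 0 < r → m ≤ Vint (f a b) r := by
    intro a b
    by_cases h : G.Adj a b
    · obtain ⟨m, hm⟩ := memU_exists_min (hU a b h); exact ⟨m, fun _ => hm⟩
    · exact ⟨0, fun h' => absurd h' h⟩
  choose mv hmv using hmv
  refine ⟨(1/2) * ∑ i, ∑ j, (if G.Adj i j then mv i j else 0), fun q hq => ?_⟩
  rw [Phi]
  have : ∀ i j : Fin N, (if G.Adj i j then mv i j else 0)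
      ≤ (if G.Adj i j then Wfun (f i j) (‖q i - q j‖^2) else 0) := by
    intro i j
    by_cases h : G.Adj i j
    · rw [if_pos h, if_pos h, wfun_eq_vint]
      exact hmv i j h _ (norm_pos_iff.mpr (sub_ne_zero.mpr (hq i j h)))
    · simp [h]
  have hs : ∀ i : Fin N, ∑ j, (if G.Adj i j then mv i j else 0)
      ≤ ∑ j, (if G.Adj i j then Wfun (f i j) (‖q i - q j‖^2) else 0) :=
    fun i => Finset.sum_le_sum (fun j _ => this i j)
  have := Finset.sum_le_sum (fun i (_ : i ∈ Finset.univ) => hs i)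
  linarith

lemma edge_bound_main (hU : ∀ i j, G.Adj i j → MemU (f i j)) (c₀ : ℝ) :
    ∃ δ M : Fin N → Fin N → ℝ, (∀ a b, G.Adj a b → 0 < δ a b) ∧
      ∀ q ∈ ConfigSpace G, Phi G f q ≤ c₀ → ∀ a b, G.Adj a b →
        δ a b ≤ ‖q a - q b‖ ∧ ‖q a - q b‖ ≤ M a b := by
  have hmv : ∀ a b : Fin N, ∃ m, G.Adj a b → ∀ r, 0 < r → m ≤ Vint (f a b) r := by
    intro a b
    by_cases h : G.Adj a b
    · obtain ⟨m, hm⟩ := memU_exists_min (hU a b h); exact ⟨m, fun _ => hm⟩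
    · exact ⟨0, fun h' => absurd h' h⟩
  choose mv hmv using hmv
  set mS : ℝ := ∑ i, ∑ j, (if G.Adj i j then mv i j else 0) with hmS
  have key : ∀ q ∈ ConfigSpace G, Phi G f q ≤ c₀ → ∀ a b, G.Adj a b →
      Vint (f a b) ‖q a - q b‖ ≤ 2*c₀ - mS + mv a b := by
    intro q hq hc a b hab
    have hterm : ∀ i j : Fin N, 0 ≤ (if G.Adj i j then Wfun (f i j) (‖q i - q j‖^2) else 0)
        - (if G.Adj i j then mv i j else 0) := by
      intro i j
      by_cases h : G.Adj i j
      · rw [if_pos h, if_pos h, wfun_eq_vint, sub_nonneg]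
        exact hmv i j h _ (norm_pos_iff.mpr (sub_ne_zero.mpr (hq i j h)))
      · simp [h]
    have h1 : (if G.Adj a b then Wfun (f a b) (‖q a - q b‖^2) else 0)
        - (if G.Adj a b then mv a b else 0)
        ≤ ∑ j, ((if G.Adj a j then Wfun (f a j) (‖q a - q j‖^2) else 0)
          - (if G.Adj a j then mv a j else 0)) :=
      Finset.single_le_sum (fun j _ => hterm a j) (Finset.mem_univ b)
    have h2 : ∑ j, ((if G.Adj a j then Wfun (f a j) (‖q a - q j‖^2) else 0)
          - (if G.Adj a j then mv a j else 0))
        ≤ ∑ i, ∑ j, ((if G.Adj i j then Wfun (f i j) (‖q i - q j‖^2) else 0)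
          - (if G.Adj i j then mv i j else 0)) :=
      Finset.single_le_sum (fun i _ => Finset.sum_nonneg (fun j _ => hterm i j))
        (Finset.mem_univ a)
    rw [if_pos hab, if_pos hab, wfun_eq_vint] at h1
    simp only [Finset.sum_sub_distrib] at h1 h2
    have hphi : Phi G f q = (1/2) * ∑ i, ∑ j,
        (if G.Adj i j then Wfun (f i j) (‖q i - q j‖^2) else 0) := rfl
    linarith
  have hbd : ∀ a b : Fin N, ∃ δ M : ℝ, 0 < δ ∧ (G.Adj a b → ∀ r, 0 < r →
      Vint (f a b) r ≤ 2*c₀ - mS + mv a b → δ ≤ r ∧ r ≤ M) := by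
    intro a b
    by_cases h : G.Adj a b
    · obtain ⟨δ, M, h1, h2⟩ := memU_bounds (hU a b h) (2*c₀ - mS + mv a b)
      exact ⟨δ, M, h1, fun _ => h2⟩
    · exact ⟨1, 1, one_pos, fun h' => absurd h' h⟩
  choose δ M hδ hδM using hbd
  exact ⟨δ, M, fun a b _ => hδ a b, fun q hq hc a b hab =>
    hδM a b hab _ (norm_pos_iff.mpr (sub_ne_zero.mpr (hq a b hab))) (key q hq hc a b hab)⟩

def compFinset (G : SimpleGraph (Fin N)) (i : Fin N) : Finset (Fin N) :=
  Finset.univ.filter (fun j => G.Reachable i j)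

lemma mem_compFinset_self (G : SimpleGraph (Fin N)) (i : Fin N) : i ∈ compFinset G i := by
  simp only [compFinset, Finset.mem_filter, Finset.mem_univ, true_and]
  exact SimpleGraph.Reachable.refl i

lemma compFinset_closed {i j k : Fin N} (hj : j ∈ compFinset G i) (hjk : G.Adj j k) :
    k ∈ compFinset G i := by
  simp only [compFinset, Finset.mem_filter, Finset.mem_univ, true_and] at hj ⊢
  exact hj.trans hjk.reachable

lemma walk_bound {q : Config (Fin N)} {Mb : ℝ}
    (hMb : ∀ a b, G.Adj a b → ‖q a - q b‖ ≤ Mb) (hMb0 : 0 ≤ Mb) {x y : Fin N}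
    (w : G.Walk x y) : ‖q x - q y‖ ≤ w.length * Mb := by
  induction w with
  | nil => simp
  | cons h w ih =>
    rename_i u v z
    calc ‖q u - q z‖ ≤ ‖q u - q v‖ + ‖q v - q z‖ := by
          have : q u - q z = (q u - q v) + (q v - q z) := by abel
          rw [this]; exact norm_add_le _ _
      _ ≤ Mb + w.length * Mb := add_le_add (hMb u v h) ih
      _ = (w.length + 1) * Mb := by ring
      _ = _ := by rw [SimpleGraph.Walk.length_cons]; push_cast; ring

lemma reach_bound {q : Config (Fin N)} {Mb : ℝ}
    (hMb : ∀ a b, G.Adj a b → ‖q a - q b‖ ≤ Mb) (hMb0 : 0 ≤ Mb) {x y : Fin N}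
    (hr : G.Reachable x y) : ‖q x - q y‖ ≤ (N : ℝ) * Mb := by
  obtain ⟨w⟩ := hr
  calc ‖q x - q y‖ ≤ w.bypass.length * Mb := walk_bound hMb hMb0 w.bypass
    _ ≤ (N : ℝ) * Mb := by
      apply mul_le_mul_of_nonneg_right _ hMb0
      have := w.bypass_isPath.length_lt
      rw [Fintype.card_fin] at this
      exact_mod_cast this.le

def Kset (G : SimpleGraph (Fin N)) (δ M : Fin N → Fin N → ℝ) (p0 : Config (Fin N)) :
    Set (Config (Fin N)) :=
  (⋂ a, ⋂ b, {q : Config (Fin N) | G.Adj a b → δ a b ≤ ‖q a - q b‖ ∧ ‖q a - q b‖ ≤ M a b}) ∩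
  (⋂ i, {q : Config (Fin N) | ∑ j ∈ compFinset G i, q j = ∑ j ∈ compFinset G i, p0 j})

lemma mem_Kset {δ M : Fin N → Fin N → ℝ} {p0 q : Config (Fin N)} :
    q ∈ Kset G δ M p0 ↔
      (∀ a b, G.Adj a b → δ a b ≤ ‖q a - q b‖ ∧ ‖q a - q b‖ ≤ M a b) ∧
      (∀ i, ∑ j ∈ compFinset G i, q j = ∑ j ∈ compFinset G i, p0 j) := by
  simp [Kset, Set.mem_iInter]

lemma isClosed_Kset {δ M : Fin N → Fin N → ℝ} {p0 : Config (Fin N)} :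
    IsClosed (Kset G δ M p0) := by
  apply IsClosed.inter
  · apply isClosed_iInter; intro a
    apply isClosed_iInter; intro b
    by_cases h : G.Adj a b
    · have : {q : Config (Fin N) | G.Adj a b → δ a b ≤ ‖q a - q b‖ ∧ ‖q a - q b‖ ≤ M a b}
          = (fun q : Config (Fin N) => ‖(projCLM a - projCLM b) q‖) ⁻¹' (Icc (δ a b) (M a b)) := by
        ext q; simp [h]
      rw [this]
      exact isClosed_Icc.preimage (projCLM a - projCLM b).continuous.norm
    · have : {q : Config (Fin N) | G.Adj a b → δ a b ≤ ‖q a - q b‖ ∧ ‖q a - q b‖ ≤ M a b}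
          = univ := by ext q; simp [h]
      rw [this]; exact isClosed_univ
  · apply isClosed_iInter; intro i
    have : {q : Config (Fin N) | ∑ j ∈ compFinset G i, q j = ∑ j ∈ compFinset G i, p0 j}
        = (fun q : Config (Fin N) => ∑ j ∈ compFinset G i, projCLM j q) ⁻¹'
          {∑ j ∈ compFinset G i, p0 j} := by
      ext q; simp
    rw [this]
    exact isClosed_singleton.preimage (continuous_finset_sum _ (fun j _ => (projCLM j).continuous))

lemma Kset_subset_config {δ M : Fin N → Fin N → ℝ} {p0 : Config (Fin N)}
    (hδ : ∀ a b, G.Adj a b → 0 < δ a b) : Kset G δ M p0 ⊆ ConfigSpace G := by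
  intro q hq a b hab
  have h1 := (mem_Kset.mp hq).1 a b hab
  have hlt := lt_of_lt_of_le (hδ a b hab) h1.1
  intro hc
  rw [hc, sub_self, norm_zero] at hlt
  exact lt_irrefl 0 hlt

set_option maxHeartbeats 1000000 in
lemma isCompact_Kset {δ M : Fin N → Fin N → ℝ} {p0 : Config (Fin N)} :
    IsCompact (Kset G δ M p0) := by
  -- bound M
  obtain ⟨Mm, hMm0, hMle⟩ : ∃ Mm : ℝ, 0 ≤ Mm ∧ ∀ a b, M a b ≤ Mm := by
    refine ⟨∑ a, ∑ b, |M a b|,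
      Finset.sum_nonneg (fun a _ => Finset.sum_nonneg (fun b _ => abs_nonneg _)), ?_⟩
    intro a b
    calc M a b ≤ |M a b| := le_abs_self _
      _ ≤ ∑ b', |M a b'| := Finset.single_le_sum (f := fun b' => |M a b'|)
          (fun b' _ => abs_nonneg _) (Finset.mem_univ b)
      _ ≤ ∑ a', ∑ b', |M a' b'| := Finset.single_le_sum
          (f := fun a' => ∑ b', |M a' b'|)
          (fun a' (_ : a' ∈ Finset.univ) => Finset.sum_nonneg (fun b' _ => abs_nonneg _))
          (Finset.mem_univ a)
  set B : ℝ := (N : ℝ) * Mm + (∑ i, ‖∑ j ∈ compFinset G i, p0 j‖) with hB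
  have hB0 : 0 ≤ B := by positivity
  apply Metric.isCompact_of_isClosed_isBounded isClosed_Kset
  apply Metric.isBounded_closedBall.subset (_ : Kset G δ M p0 ⊆ closedBall 0 (Real.sqrt ((N:ℝ) * B^2)))
  intro q hq
  obtain ⟨h1, h2⟩ := mem_Kset.mp hq
  have hedge : ∀ a b, G.Adj a b → ‖q a - q b‖ ≤ Mm := fun a b hab =>
    le_trans (h1 a b hab).2 (hMle a b)
  have hcoord : ∀ i, ‖q i‖ ≤ B := by
    intro i
    set S := compFinset G i with hS
    have hcard : 1 ≤ S.card := Finset.card_pos.mpr ⟨i, mem_compFinset_self G i⟩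
    have hpair : ∀ j ∈ S, ‖q i - q j‖ ≤ (N:ℝ) * Mm := by
      intro j hj
      simp only [hS, compFinset, Finset.mem_filter] at hj
      exact reach_bound hedge hMm0 hj.2
    have hsum : ‖∑ j ∈ S, (q i - q j)‖ ≤ (S.card : ℝ) * ((N:ℝ) * Mm) := by
      calc ‖∑ j ∈ S, (q i - q j)‖ ≤ ∑ j ∈ S, ‖q i - q j‖ := norm_sum_le _ _
        _ ≤ ∑ _j ∈ S, (N:ℝ) * Mm := Finset.sum_le_sum hpair
        _ = (S.card : ℝ) * ((N:ℝ) * Mm) := by rw [Finset.sum_const, nsmul_eq_mul]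
    have hdecomp : ∑ j ∈ S, (q i - q j) = (S.card : ℕ) • q i - ∑ j ∈ S, q j := by
      rw [Finset.sum_sub_distrib, Finset.sum_const]
    have hnormi : (S.card : ℝ) * ‖q i‖ ≤ (S.card : ℝ) * ((N:ℝ) * Mm) + ‖∑ j ∈ S, p0 j‖ := by
      have : (S.card : ℕ) • q i = (∑ j ∈ S, (q i - q j)) + ∑ j ∈ S, q j := by
        rw [hdecomp]; abel
      have hn : ‖(S.card : ℕ) • q i‖ = (S.card : ℝ) * ‖q i‖ := by
        rw [← Nat.cast_smul_eq_nsmul ℝ, norm_smul, Real.norm_natCast]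
      calc (S.card : ℝ) * ‖q i‖ = ‖(S.card : ℕ) • q i‖ := hn.symm
        _ ≤ ‖∑ j ∈ S, (q i - q j)‖ + ‖∑ j ∈ S, q j‖ := by rw [this]; exact norm_add_le _ _
        _ ≤ (S.card : ℝ) * ((N:ℝ) * Mm) + ‖∑ j ∈ S, p0 j‖ := by
            rw [h2 i]; exact add_le_add hsum le_rfl
    have hci : ‖∑ j ∈ S, p0 j‖ ≤ ∑ i', ‖∑ j ∈ compFinset G i', p0 j‖ := by
      rw [hS]
      exact Finset.single_le_sum (f := fun i' => ‖∑ j ∈ compFinset G i', p0 j‖)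
        (fun i' (_ : i' ∈ Finset.univ) => norm_nonneg _) (Finset.mem_univ i)
    have hc1 : (1:ℝ) ≤ (S.card : ℝ) := by exact_mod_cast hcard
    -- (card) * ‖q i‖ ≤ card * (N Mm) + c ≤ card * B
    have : (S.card : ℝ) * ‖q i‖ ≤ (S.card : ℝ) * B := by
      rw [hB]
      have : ‖∑ j ∈ S, p0 j‖ ≤ (S.card : ℝ) * (∑ i', ‖∑ j ∈ compFinset G i', p0 j‖) := by
        calc ‖∑ j ∈ S, p0 j‖ ≤ ∑ i', ‖∑ j ∈ compFinset G i', p0 j‖ := hci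
          _ ≤ (S.card : ℝ) * _ := by
              nth_rewrite 1 [← one_mul (∑ i', ‖∑ j ∈ compFinset G i', p0 j‖)]
              apply mul_le_mul_of_nonneg_right hc1
              exact Finset.sum_nonneg (fun i' _ => norm_nonneg _)
      calc (S.card : ℝ) * ‖q i‖ ≤ (S.card : ℝ) * ((N:ℝ) * Mm) + ‖∑ j ∈ S, p0 j‖ := hnormi
        _ ≤ (S.card : ℝ) * ((N:ℝ) * Mm) + (S.card : ℝ) * (∑ i', ‖∑ j ∈ compFinset G i', p0 j‖) :=
            add_le_add le_rfl this
        _ = (S.card : ℝ) * ((N:ℝ) * Mm + ∑ i', ‖∑ j ∈ compFinset G i', p0 j‖) := by ring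
    exact le_of_mul_le_mul_left (by linarith [this]) (lt_of_lt_of_le one_pos hc1)
  -- now ‖q‖ ≤ sqrt (N B²)
  rw [mem_closedBall_zero_iff]
  have hq2 : ‖q‖^2 ≤ (N:ℝ) * B^2 := by
    have hnormsq : ‖q‖^2 = ∑ i, ‖q i‖^2 := by
      rw [← real_inner_self_eq_norm_sq, PiLp.inner_apply]
      exact Finset.sum_congr rfl (fun i _ => real_inner_self_eq_norm_sq _)
    rw [hnormsq]
    calc ∑ i, ‖q i‖^2 ≤ ∑ _i : Fin N, B^2 := by
          apply Finset.sum_le_sum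
          intro i _
          exact pow_le_pow_left₀ (norm_nonneg _) (hcoord i) 2
      _ = (N:ℝ) * B^2 := by rw [Finset.sum_const, nsmul_eq_mul, Finset.card_univ, Fintype.card_fin]
  have := Real.sqrt_le_sqrt hq2
  rw [Real.sqrt_sq (norm_nonneg q)] at this
  exact this

open scoped NNReal in
open ODE IsPicardLindelof in
lemma pl_solution {E : Type*} [NormedAddCommGroup E] [NormedSpace ℝ E] [CompleteSpace E]
    {v : E → E} {tMin t₀ tMax : ℝ} (ht₀ : t₀ ∈ Icc tMin tMax) {x₀ : E} {a L K : ℝ≥0}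
    (hpl : IsPicardLindelof (fun _ => v) (⟨t₀, ht₀⟩ : Icc tMin tMax) x₀ a 0 L K) :
    ∃ g : ℝ → E, g t₀ = x₀ ∧ (∀ t ∈ Icc tMin tMax, g t ∈ closedBall x₀ a) ∧
      ∀ t ∈ Icc tMin tMax, HasDerivWithinAt g (v (g t)) (Icc tMin tMax) t := by
  obtain ⟨α, hα⟩ := FunSpace.exists_isFixedPt_next hpl (mem_closedBall_self le_rfl)
  refine ⟨α.compProj, ?_, fun t _ => α.compProj_mem_closedBall hpl.mul_max_le, fun t ht ↦ ?_⟩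
  · show α.compProj ((⟨t₀, ht₀⟩ : Icc tMin tMax) : ℝ) = x₀
    rw [FunSpace.compProj_val, ← hα, FunSpace.next_apply₀]
  apply hasDerivWithinAt_picard_Icc ht₀ hpl.continuousOn_uncurry
    α.continuous_compProj.continuousOn (fun _ ht' ↦ α.compProj_mem_closedBall hpl.mul_max_le)
    x₀ ht |>.congr_of_mem _ ht
  intro t' ht'
  nth_rw 1 [← hα]
  rw [FunSpace.compProj_of_mem ht', FunSpace.next_apply]

open scoped NNReal in
set_option maxHeartbeats 1000000 in
lemma step_lemma
    (hU : ∀ i j, G.Adj i j → MemU (f i j)) (hsym : ∀ i j, f i j = f j i)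
    {K' : Set (Config (Fin N))} {c₀ C L'' ρ ε : ℝ}
    (hρ : 0 < ρ) (hK'U : K' ⊆ ConfigSpace G)
    (hC : ∀ x ∈ K', ‖formationField G.Adj f x‖ ≤ C) (hC0 : 0 ≤ C)
    (hLip : ∀ x ∈ K', ‖fderiv ℝ (formationField G.Adj f) x‖ ≤ L'')
    (hε : ε = (ρ/4) / (C+1))
    {q : Config (Fin N)}
    (hqball : closedBall q (ρ/2) ⊆ K')
    (hq : q ∈ ConfigSpace G) (hqc : Phi G f q ≤ c₀)
    (a : ℝ) :
    ∃ g : ℝ → Config (Fin N), g a = q ∧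
      (∀ t ∈ Icc a (a+ε), HasDerivWithinAt g (formationField G.Adj f (g t)) (Icc a (a+ε)) t) ∧
      (∀ t ∈ Icc a (a+ε), g t ∈ closedBall q (ρ/4)) ∧
      (∀ t ∈ Icc a (a+ε), Phi G f (g t) ≤ c₀) ∧
      (∀ t ∈ Icc a (a+ε), ∀ i, ∑ j ∈ compFinset G i, g t j = ∑ j ∈ compFinset G i, q j) := by
  have hεpos : 0 < ε := by rw [hε]; positivity
  have hball_sub : closedBall q (ρ/4) ⊆ closedBall q (ρ/2) :=
    closedBall_subset_closedBall (by linarith)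
  set F := formationField G.Adj f with hF
  -- Lipschitz on the small ball
  have hlip : LipschitzOnWith (Real.toNNReal L'') F (closedBall q (ρ/4)) := by
    rw [lipschitzOnWith_iff_norm_sub_le]
    intro x hx y hy
    have := Convex.norm_image_sub_le_of_norm_fderiv_le (𝕜 := ℝ) (f := F)
      (fun z hz => (contDiffAt_F hU (hK'U (hqball (hball_sub hz)))).differentiableAt (by norm_num))
      (fun z hz => le_trans (hLip z (hqball (hball_sub hz))) (Real.le_coe_toNNReal L''))
      (convex_closedBall q (ρ/4)) hy hx
    exact this
  -- Picard-Lindelof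
  have ha0 : a ∈ Icc a (a+ε) := ⟨le_rfl, by linarith⟩
  have hC1 : C + 1 ≠ 0 := (by positivity : (0:ℝ) < C + 1).ne'
  have hpl : IsPicardLindelof (fun _ : ℝ => F) (⟨a, ha0⟩ : Icc a (a+ε)) q
      (⟨ρ/4, by positivity⟩ : ℝ≥0) 0 (⟨C+1, by linarith⟩ : ℝ≥0) (Real.toNNReal L'') := by
    refine ⟨fun _ _ => hlip,
      fun _ _ => continuousOn_const, fun t _ x hx => ?_, ?_⟩
    · show ‖F x‖ ≤ C + 1
      exact le_trans (hC x (hqball (hball_sub hx))) (by linarith)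
    · show (C+1) * max (a + ε - a) (a - a) ≤ ρ/4 - 0
      have hmax : max (a + ε - a) (a - a) = ε := by
        rw [max_eq_left (by linarith)]; ring
      rw [hmax, hε, sub_zero]
      apply le_of_eq
      field_simp
  obtain ⟨g, hg0, hgball, hgderiv⟩ := pl_solution ha0 hpl
  have hgK' : ∀ t ∈ Icc a (a+ε), g t ∈ K' := fun t ht => hqball (hball_sub (hgball t ht))
  have hgCS : ∀ t ∈ Icc a (a+ε), g t ∈ ConfigSpace G := fun t ht => hK'U (hgK' t ht)
  have hgd : ∀ t ∈ Icc a (a+ε), HasDerivWithinAt g (F (g t)) (Icc a (a+ε)) t := hgderiv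
  -- Phi is antitone along g
  have hphiD : ∀ t ∈ Icc a (a+ε),
      HasDerivWithinAt (fun u => Phi G f (g u)) (-‖F (g t)‖^2) (Icc a (a+ε)) t :=
    fun t ht => phi_hasDerivWithinAt hU hsym (hgCS t ht) (hgd t ht)
  have hanti : AntitoneOn (fun u => Phi G f (g u)) (Icc a (a+ε)) := by
    apply antitoneOn_of_hasDerivWithinAt_nonpos (convex_Icc a (a+ε))
      (fun t ht => (hphiD t ht).continuousWithinAt)
      (f' := fun t => -‖F (g t)‖^2)
    · intro x hx
      rw [interior_Icc] at hx ⊢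
      exact (hphiD x (Ioo_subset_Icc_self hx)).mono Ioo_subset_Icc_self
    · intro x hx
      simp only [neg_nonpos]
      positivity
  have haIcc : a ∈ Icc a (a+ε) := ⟨le_rfl, by linarith⟩
  refine ⟨g, hg0, hgderiv, hgball, ?_, ?_⟩
  · intro t ht
    calc Phi G f (g t) ≤ Phi G f (g a) := hanti haIcc ht ht.1
      _ = Phi G f q := by rw [hg0]
      _ ≤ c₀ := hqc
  · intro t ht i
    have hzero : ∀ x ∈ Icc a (a+ε), HasDerivWithinAt
        (fun u => ∑ j ∈ compFinset G i, g u j) ((fun _ => (0:Plane)) x) (Icc a (a+ε)) x :=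
      fun x hx => compsum_hasDerivWithinAt hsym (compFinset G i)
        (fun _ _ _ h => compFinset_closed (by assumption) h) (hgd x hx)
    have := Convex.norm_image_sub_le_of_norm_hasDerivWithin_le (C := 0) hzero
      (fun x _ => by simp) (convex_Icc a (a+ε)) haIcc ht
    rw [zero_mul, norm_le_zero_iff, sub_eq_zero] at this
    rw [this, hg0]

set_option maxHeartbeats 2000000 in
theorem main_thm {N : ℕ} (G : SimpleGraph (Fin N))
    (f : Fin N → Fin N → ℝ → ℝ) (hsym : ∀ i j, f i j = f j i)
    (hU : ∀ i j, G.Adj i j → MemU (f i j))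
    (p0 : Config (Fin N)) (hp0 : p0 ∈ ConfigSpace G) :
    ∃ sol : ℝ → Config (Fin N), sol 0 = p0 ∧
      (∀ t : ℝ, 0 ≤ t → HasDerivAt sol (formationField G.Adj f (sol t)) t) ∧
      (∀ t : ℝ, 0 ≤ t → sol t ∈ ConfigSpace G) ∧
      Filter.Tendsto (fun t => Metric.infDist (sol t)
          {q : Config (Fin N) | q ∈ ConfigSpace G ∧ formationField G.Adj f q = 0})
        Filter.atTop (nhds 0) := by
  classical
  set F := formationField G.Adj f with hFdef
  set c₀ := Phi G f p0 with hc₀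
  obtain ⟨δ, M, hδpos, hedge⟩ := edge_bound_main hU c₀
  set K := Kset G δ M p0 with hKdef
  have hKc : IsCompact K := isCompact_Kset
  have hKU : K ⊆ ConfigSpace G := Kset_subset_config hδpos
  have hInvK : ∀ q : Config (Fin N), q ∈ ConfigSpace G → Phi G f q ≤ c₀ →
      (∀ i, ∑ j ∈ compFinset G i, q j = ∑ j ∈ compFinset G i, p0 j) → q ∈ K := by
    intro q h1 h2 h3
    exact mem_Kset.mpr ⟨fun a b hab => hedge q h1 h2 a b hab, h3⟩
  have hp0K : p0 ∈ K := hInvK p0 hp0 le_rfl (fun _ => rfl)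
  obtain ⟨ρ, hρ, hthick⟩ := hKc.exists_thickening_subset_open isOpen_configSpace hKU
  set K' := Metric.cthickening (ρ/2) K with hK'def
  have hK'c : IsCompact K' := hKc.cthickening
  have hK'U : K' ⊆ ConfigSpace G :=
    (Metric.cthickening_subset_thickening' hρ (by linarith) K).trans hthick
  have hKK' : K ⊆ K' := Metric.self_subset_cthickening K
  have hballK' : ∀ q ∈ K, closedBall q (ρ/2) ⊆ K' :=
    fun q hq => Metric.closedBall_subset_cthickening hq (ρ/2)
  have hFcont : ContinuousOn F K' :=
    fun x hx => (contDiffAt_F hU (hK'U hx)).continuousAt.continuousWithinAt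
  obtain ⟨C, hC⟩ := hK'c.exists_bound_of_continuousOn hFcont
  have hC0 : 0 ≤ C := le_trans (norm_nonneg (F p0)) (hC p0 (hKK' hp0K))
  have hFCD : ContDiffOn ℝ 1 F (ConfigSpace G) :=
    fun x hx => (contDiffAt_F hU hx).contDiffWithinAt
  have hfderiv_cont : ContinuousOn (fderiv ℝ F) K' :=
    (hFCD.continuousOn_fderiv_of_isOpen isOpen_configSpace le_rfl).mono hK'U
  obtain ⟨L'', hL⟩ := hK'c.exists_bound_of_continuousOn hfderiv_cont
  set ε := (ρ/4) / (C+1) with hεdef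
  have hεpos : 0 < ε := by rw [hεdef]; positivity
  -- the one-step solver, as a total choice function
  have stepC : ∀ (q : Config (Fin N)) (a : ℝ), ∃ g : ℝ → Config (Fin N),
      (q ∈ ConfigSpace G ∧ Phi G f q ≤ c₀ ∧
        (∀ i, ∑ j ∈ compFinset G i, q j = ∑ j ∈ compFinset G i, p0 j)) →
      (g a = q ∧
        (∀ t ∈ Icc a (a+ε), HasDerivWithinAt g (F (g t)) (Icc a (a+ε)) t) ∧
        (∀ t ∈ Icc a (a+ε), g t ∈ closedBall q (ρ/4)) ∧
        (∀ t ∈ Icc a (a+ε), Phi G f (g t) ≤ c₀) ∧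
        (∀ t ∈ Icc a (a+ε), ∀ i,
          ∑ j ∈ compFinset G i, g t j = ∑ j ∈ compFinset G i, p0 j)) := by
    intro q a
    by_cases h : q ∈ ConfigSpace G ∧ Phi G f q ≤ c₀ ∧
        (∀ i, ∑ j ∈ compFinset G i, q j = ∑ j ∈ compFinset G i, p0 j)
    · obtain ⟨g, hg0, hgd, hgb, hgp, hgs⟩ := step_lemma hU hsym hρ hK'U hC hC0 hL hεdef
        (hballK' q (hInvK q h.1 h.2.1 h.2.2)) h.1 h.2.1 a
      exact ⟨g, fun _ => ⟨hg0, hgd, hgb, hgp, fun t ht i => (hgs t ht i).trans (h.2.2 i)⟩⟩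
    · exact ⟨fun _ => q, fun hc => absurd hc h⟩
  choose gs hgs using stepC
  -- iterate
  set Qs : ℕ → Config (Fin N) :=
    fun n => Nat.rec p0 (fun n prev => gs prev ((n:ℝ)*ε) ((n:ℝ)*ε + ε)) n with hQs
  have hQsInv : ∀ n, Qs n ∈ ConfigSpace G ∧ Phi G f (Qs n) ≤ c₀ ∧
      (∀ i, ∑ j ∈ compFinset G i, Qs n j = ∑ j ∈ compFinset G i, p0 j) := by
    intro n
    induction n with
    | zero => exact ⟨hp0, le_rfl, fun _ => rfl⟩
    | succ n ih =>
      obtain ⟨hg0, hgd, hgb, hgp, hgs'⟩ := hgs (Qs n) ((n:ℝ)*ε) ih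
      have hmem : (n:ℝ)*ε + ε ∈ Icc ((n:ℝ)*ε) ((n:ℝ)*ε + ε) := ⟨by linarith, le_rfl⟩
      have hQn1 : Qs (n+1) = gs (Qs n) ((n:ℝ)*ε) ((n:ℝ)*ε + ε) := rfl
      refine ⟨?_, ?_, ?_⟩
      · rw [hQn1]
        exact hK'U (hballK' (Qs n) (hInvK _ ih.1 ih.2.1 ih.2.2)
          (closedBall_subset_closedBall (by linarith) (hgb _ hmem)))
      · rw [hQn1]; exact hgp _ hmem
      · rw [hQn1]; exact hgs' _ hmem
  set gn : ℕ → ℝ → Config (Fin N) := fun n => gs (Qs n) ((n:ℝ)*ε) with hgn_def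
  have hgn : ∀ n, gn n ((n:ℝ)*ε) = Qs n ∧
      (∀ t ∈ Icc ((n:ℝ)*ε) ((n:ℝ)*ε+ε),
        HasDerivWithinAt (gn n) (F (gn n t)) (Icc ((n:ℝ)*ε) ((n:ℝ)*ε+ε)) t) ∧
      (∀ t ∈ Icc ((n:ℝ)*ε) ((n:ℝ)*ε+ε), gn n t ∈ closedBall (Qs n) (ρ/4)) ∧
      (∀ t ∈ Icc ((n:ℝ)*ε) ((n:ℝ)*ε+ε), Phi G f (gn n t) ≤ c₀) ∧
      (∀ t ∈ Icc ((n:ℝ)*ε) ((n:ℝ)*ε+ε), ∀ i,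
        ∑ j ∈ compFinset G i, gn n t j = ∑ j ∈ compFinset G i, p0 j) :=
    fun n => hgs (Qs n) ((n:ℝ)*ε) (hQsInv n)
  have hQsucc : ∀ n : ℕ, Qs (n+1) = gn n ((n:ℝ)*ε + ε) := fun n => rfl
  -- the global solution
  set sol : ℝ → Config (Fin N) :=
    fun t => if t < 0 then p0 + t • F p0 else gn ⌊t/ε⌋₊ t with hsol_def
  have hagree : ∀ n : ℕ, ∀ s ∈ Icc ((n:ℝ)*ε) ((n:ℝ)*ε + ε), sol s = gn n s := by
    intro n s hs
    have hs0 : 0 ≤ s := le_trans (by positivity) hs.1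
    rw [hsol_def]
    simp only [if_neg (not_lt.mpr hs0)]
    rcases lt_or_eq_of_le hs.2 with h | h
    · have hfl : ⌊s/ε⌋₊ = n := by
        rw [Nat.floor_eq_iff (by positivity)]
        constructor
        · rw [le_div_iff₀ hεpos]; exact hs.1
        · rw [div_lt_iff₀ hεpos]; push_cast; linarith
      rw [hfl]
    · have hfl : ⌊s/ε⌋₊ = n + 1 := by
        rw [Nat.floor_eq_iff (by positivity)]
        constructor
        · rw [le_div_iff₀ hεpos]; push_cast; linarith
        · rw [div_lt_iff₀ hεpos]; push_cast; linarith [hεpos]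
      subst h
      rw [hfl]
      have hcast : (((n+1:ℕ)):ℝ)*ε = (n:ℝ)*ε + ε := by push_cast; ring
      have h1 := (hgn (n+1)).1
      rw [hcast] at h1
      try rw [h1]
      try exact hQsucc n
  -- membership at the grid and along the flow
  have hfloor : ∀ t : ℝ, 0 ≤ t → t ∈ Icc ((⌊t/ε⌋₊:ℝ)*ε) ((⌊t/ε⌋₊:ℝ)*ε + ε) ∧
      t < (⌊t/ε⌋₊:ℝ)*ε + ε := by
    intro t ht
    have h1 : (⌊t/ε⌋₊:ℝ) ≤ t/ε := Nat.floor_le (by positivity)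
    have h2 : t/ε < (⌊t/ε⌋₊:ℝ) + 1 := Nat.lt_floor_add_one (t/ε)
    have hlow : (⌊t/ε⌋₊:ℝ)*ε ≤ t := by
      calc (⌊t/ε⌋₊:ℝ)*ε ≤ (t/ε)*ε := mul_le_mul_of_nonneg_right h1 hεpos.le
        _ = t := by field_simp
    have hhigh : t < (⌊t/ε⌋₊:ℝ)*ε + ε := by
      calc t = (t/ε)*ε := by field_simp
        _ < ((⌊t/ε⌋₊:ℝ)+1)*ε := mul_lt_mul_of_pos_right h2 hεpos
        _ = (⌊t/ε⌋₊:ℝ)*ε + ε := by ring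
    exact ⟨⟨hlow, hhigh.le⟩, hhigh⟩
  have hQsK : ∀ n, Qs n ∈ K := fun n => hInvK _ (hQsInv n).1 (hQsInv n).2.1 (hQsInv n).2.2
  have hsol_ball : ∀ t : ℝ, 0 ≤ t → ∃ qk ∈ K, sol t ∈ closedBall qk (ρ/4) := by
    intro t ht
    refine ⟨Qs ⌊t/ε⌋₊, hQsK _, ?_⟩
    rw [hagree _ _ (hfloor t ht).1]
    exact (hgn _).2.2.1 t (hfloor t ht).1
  have hsolK' : ∀ t : ℝ, 0 ≤ t → sol t ∈ K' := by
    intro t ht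
    obtain ⟨qk, hqk, hball⟩ := hsol_ball t ht
    exact hballK' qk hqk (closedBall_subset_closedBall (by linarith) hball)
  have hsolCS : ∀ t : ℝ, 0 ≤ t → sol t ∈ ConfigSpace G := fun t ht => hK'U (hsolK' t ht)
  have hsol0 : sol 0 = p0 := by
    have h0 : (0:ℝ) ∈ Icc (((0:ℕ):ℝ)*ε) (((0:ℕ):ℝ)*ε + ε) := by
      simp only [Nat.cast_zero, zero_mul]
      exact ⟨le_rfl, by linarith⟩
    rw [hagree 0 0 h0]
    have := (hgn 0).1
    rw [Nat.cast_zero, zero_mul] at this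
    exact this
  -- the within-derivative on each step interval
  have hWithin : ∀ (n:ℕ), ∀ t ∈ Icc ((n:ℝ)*ε) ((n:ℝ)*ε+ε),
      HasDerivWithinAt sol (F (sol t)) (Icc ((n:ℝ)*ε) ((n:ℝ)*ε+ε)) t := by
    intro n t ht
    have h1 := ((hgn n).2.1 t ht).congr (fun s hs => hagree n s hs) (hagree n t ht)
    rwa [← hagree n t ht] at h1
  -- the full derivative for t ≥ 0
  have hDeriv : ∀ t : ℝ, 0 ≤ t → HasDerivAt sol (F (sol t)) t := by
    intro t ht
    obtain ⟨htIcc, hthigh⟩ := hfloor t ht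
    rcases eq_or_lt_of_le htIcc.1 with heq | hlt
    · -- junction point
      rcases Nat.eq_zero_or_pos ⌊t/ε⌋₊ with h0 | hpos
      · -- t = 0
        have ht0 : t = 0 := by
          rw [h0] at heq
          simpa using heq.symm
        subst ht0
        have hmem0 : (0:ℝ) ∈ Icc (((0:ℕ):ℝ)*ε) (((0:ℕ):ℝ)*ε + ε) := by
          simp only [Nat.cast_zero, zero_mul]; exact ⟨le_rfl, by linarith⟩
        have hR := hWithin 0 0 hmem0
        simp only [Nat.cast_zero, zero_mul, zero_add] at hR
        have hlin : HasDerivAt (fun s : ℝ => p0 + s • F p0) (F p0) 0 := by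
          have h := ((hasDerivAt_id (0:ℝ)).smul_const (F p0)).const_add p0
          simpa using h
        have hLft : HasDerivWithinAt sol (F (sol 0)) (Iic 0) 0 := by
          have heq0 : F (sol 0) = F p0 := by rw [hsol0]
          rw [heq0]
          apply hlin.hasDerivWithinAt.congr
          · intro s hs
            rcases lt_or_eq_of_le (mem_Iic.mp hs) with h | h
            · rw [hsol_def]; simp only [if_pos h]
            · subst h; rw [hsol0]; simp
          · rw [hsol0]; simp
        have hun := hLft.union hR
        rw [Set.Iic_union_Icc_eq_Iic (hεpos.le : (0:ℝ) ≤ ε)] at hun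
        exact hun.hasDerivAt (Iic_mem_nhds (by linarith))
      · -- t = n*ε with n ≥ 1
        obtain ⟨m, hm⟩ : ∃ m, ⌊t/ε⌋₊ = m + 1 := ⟨⌊t/ε⌋₊ - 1, (Nat.succ_pred_eq_of_pos hpos).symm⟩
        have hcast : ((⌊t/ε⌋₊:ℕ):ℝ)*ε = (m:ℝ)*ε + ε := by rw [hm]; push_cast; ring
        have htm : t = (m:ℝ)*ε + ε := by rw [← heq, hcast]
        have hmemL : t ∈ Icc ((m:ℝ)*ε) ((m:ℝ)*ε + ε) := ⟨by rw [htm]; linarith, le_of_eq htm⟩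
        have hL' := hWithin m t hmemL
        have hR' := hWithin ⌊t/ε⌋₊ t htIcc
        have hun := hL'.union hR'
        rw [hcast] at hun
        rw [Set.Icc_union_Icc_eq_Icc (by linarith : (m:ℝ)*ε ≤ (m:ℝ)*ε + ε)
          (by linarith : (m:ℝ)*ε + ε ≤ (m:ℝ)*ε + ε + ε)] at hun
        apply hun.hasDerivAt
        apply Icc_mem_nhds
        · rw [htm]; linarith
        · rw [htm]; linarith
    · exact (hWithin ⌊t/ε⌋₊ t htIcc).hasDerivAt (Icc_mem_nhds hlt hthigh)
  -- Phi along sol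
  set phiSol : ℝ → ℝ := fun t => Phi G f (sol t) with hphiSol
  have hphiDeriv : ∀ t : ℝ, 0 ≤ t → HasDerivAt phiSol (-‖F (sol t)‖^2) t := by
    intro t ht
    have h := phi_hasDerivWithinAt hU hsym (hsolCS t ht)
      ((hDeriv t ht).hasDerivWithinAt : HasDerivWithinAt sol (F (sol t)) univ t)
    exact hasDerivWithinAt_univ.mp h
  have hphiCont : ContinuousOn phiSol (Ici 0) :=
    fun t ht => ((hphiDeriv t ht).continuousAt).continuousWithinAt
  have hphiAnti : AntitoneOn phiSol (Ici 0) := by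
    apply antitoneOn_of_hasDerivWithinAt_nonpos (convex_Ici 0) hphiCont
      (f' := fun t => -‖F (sol t)‖^2)
    · intro x hx
      rw [interior_Ici] at hx
      exact (hphiDeriv x (le_of_lt hx)).hasDerivWithinAt
    · intro x hx
      simp only [neg_nonpos]
      positivity
  obtain ⟨lb, hlb⟩ := phi_bddBelow hU
  have hmax0 : ∀ t : ℝ, (0:ℝ) ≤ max t 0 := fun t => le_max_right t 0
  have hAnti2 : Antitone (fun t => phiSol (max t 0)) := by
    intro s t hst
    exact hphiAnti (hmax0 s) (hmax0 t) (max_le_max hst le_rfl)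
  have hbdd : BddBelow (Set.range fun t => phiSol (max t 0)) := by
    refine ⟨lb, ?_⟩
    rintro x ⟨t, rfl⟩
    exact hlb _ (hsolCS _ (hmax0 t))
  have hconv := tendsto_atTop_ciInf hAnti2 hbdd
  set Lv := ⨅ t : ℝ, phiSol (max t 0) with hLvdef
  have hconv' : Tendsto phiSol atTop (𝓝 Lv) := by
    apply hconv.congr'
    filter_upwards [eventually_ge_atTop (0:ℝ)] with t ht
    rw [max_eq_left ht]
  have hge : ∀ t : ℝ, 0 ≤ t → Lv ≤ phiSol t := by
    intro t ht
    have h := ciInf_le hbdd t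
    rwa [max_eq_left ht] at h
  have hsolLip : ∀ t1 t2 : ℝ, 0 ≤ t1 → t1 ≤ t2 → ‖sol t2 - sol t1‖ ≤ C * (t2 - t1) := by
    intro t1 t2 h1 h12
    have hb := Convex.norm_image_sub_le_of_norm_hasDerivWithin_le
      (f := sol) (f' := fun s => F (sol s)) (s := Icc t1 t2) (C := C)
      (fun s hs => (hDeriv s (le_trans h1 hs.1)).hasDerivWithinAt)
      (fun s hs => hC _ (hsolK' s (le_trans h1 hs.1)))
      (convex_Icc t1 t2) (left_mem_Icc.mpr h12) (right_mem_Icc.mpr h12)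
    calc ‖sol t2 - sol t1‖ ≤ C * ‖t2 - t1‖ := hb
      _ = C * (t2 - t1) := by rw [Real.norm_eq_abs, abs_of_nonneg (by linarith)]
  have hFnear : ∀ t : ℝ, 0 ≤ t → ∀ y, dist y (sol t) ≤ ρ/4 →
      ‖F y - F (sol t)‖ ≤ (max L'' 0) * ‖y - sol t‖ := by
    intro t ht y hy
    obtain ⟨qk, hqk, hball⟩ := hsol_ball t ht
    have hsub : closedBall qk (ρ/2) ⊆ K' := hballK' qk hqk
    have hyin : y ∈ closedBall qk (ρ/2) := by
      rw [mem_closedBall] at hball ⊢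
      calc dist y qk ≤ dist y (sol t) + dist (sol t) qk := dist_triangle _ _ _
        _ ≤ ρ/4 + ρ/4 := add_le_add hy hball
        _ = ρ/2 := by ring
    have hxin : sol t ∈ closedBall qk (ρ/2) :=
      closedBall_subset_closedBall (by linarith) hball
    exact Convex.norm_image_sub_le_of_norm_fderiv_le (𝕜 := ℝ) (f := F)
      (fun z hz => (contDiffAt_F hU (hK'U (hsub hz))).differentiableAt (by norm_num))
      (fun z hz => le_trans (hL z (hsub hz)) (le_max_left _ _))
      (convex_closedBall qk (ρ/2)) hxin hyin
  have hFtend : Tendsto (fun t => F (sol t)) atTop (𝓝 0) := by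
    rw [NormedAddCommGroup.tendsto_nhds_zero]
    intro ε₀ hε₀
    set L3 := max L'' 0 with hL3def
    have hL30 : (0:ℝ) ≤ L3 := le_max_right _ _
    set d := min ((ρ/4)/(C+1)) (ε₀/(2*(L3+1)*(C+1))) with hddef
    have hdpos : 0 < d := by
      apply lt_min
      · positivity
      · positivity
    have hkey : ∀ t, 0 ≤ t → ε₀ ≤ ‖F (sol t)‖ → d * (ε₀/2)^2 ≤ phiSol t - phiSol (t+d) := by
      intro t ht hFt
      have hFs : ∀ s ∈ Icc t (t+d), ε₀/2 ≤ ‖F (sol s)‖ := by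
        intro s hs
        have hs0 : (0:ℝ) ≤ s := le_trans ht hs.1
        have hlips : ‖sol s - sol t‖ ≤ C * (s - t) := hsolLip t s ht hs.1
        have hCd : C * (s - t) ≤ (C+1) * d := by
          have h1 : C * (s - t) ≤ C * d := by
            apply mul_le_mul_of_nonneg_left _ hC0
            linarith [hs.2]
          nlinarith [hdpos.le]
        have hdist : dist (sol s) (sol t) ≤ ρ/4 := by
          rw [dist_eq_norm]
          calc ‖sol s - sol t‖ ≤ (C+1) * d := le_trans hlips hCd
            _ ≤ (C+1) * ((ρ/4)/(C+1)) := by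
                apply mul_le_mul_of_nonneg_left (min_le_left _ _) (by linarith)
            _ = ρ/4 := by field_simp
        have hdiff : ‖F (sol s) - F (sol t)‖ ≤ ε₀/2 := by
          calc ‖F (sol s) - F (sol t)‖ ≤ L3 * ‖sol s - sol t‖ := by
                apply hFnear t ht
                rwa [dist_eq_norm]
            _ ≤ L3 * ((C+1)*d) := by
                apply mul_le_mul_of_nonneg_left (le_trans hlips hCd) hL30
            _ ≤ (L3+1) * ((C+1)*d) := by nlinarith [hdpos.le, hC0]
            _ ≤ (L3+1) * ((C+1)*(ε₀/(2*(L3+1)*(C+1)))) := by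
                apply mul_le_mul_of_nonneg_left _ (by linarith)
                apply mul_le_mul_of_nonneg_left (min_le_right _ _) (by linarith)
            _ = ε₀/2 := by field_simp
        have habs := abs_norm_sub_norm_le (F (sol s)) (F (sol t))
        rw [abs_le] at habs
        linarith [habs.1, habs.2]
      have hXD : ∀ s, 0 ≤ s → HasDerivAt (fun u => phiSol u + (ε₀/2)^2 * u)
          (-‖F (sol s)‖^2 + (ε₀/2)^2) s := by
        intro s hs
        have h1 := (hphiDeriv s hs).add ((hasDerivAt_id s).const_mul ((ε₀/2)^2))
        simp only [id_eq, mul_one] at h1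
        exact h1
      have hχ : AntitoneOn (fun u => phiSol u + (ε₀/2)^2 * u) (Icc t (t+d)) := by
        apply antitoneOn_of_hasDerivWithinAt_nonpos (convex_Icc _ _)
          (fun s hs => ((hXD s (le_trans ht hs.1)).continuousAt).continuousWithinAt)
          (f' := fun s => -‖F (sol s)‖^2 + (ε₀/2)^2)
        · intro x hx
          rw [interior_Icc] at hx
          exact (hXD x (le_trans ht hx.1.le)).hasDerivWithinAt
        · intro x hx
          rw [interior_Icc] at hx
          have h1 := hFs x (Ioo_subset_Icc_self hx)
          have h2 : (ε₀/2)^2 ≤ ‖F (sol x)‖^2 :=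
            pow_le_pow_left₀ (by positivity) h1 2
          linarith
      have := hχ (left_mem_Icc.mpr (by linarith)) (right_mem_Icc.mpr (by linarith))
        (by linarith : t ≤ t + d)
      simp only at this
      linarith
    have hev : ∀ᶠ u in atTop, phiSol u < Lv + d * (ε₀/2)^2 := by
      apply Filter.Tendsto.eventually_lt_const _ hconv'
      have hpos2 : 0 < d * (ε₀/2)^2 := by positivity
      linarith
    obtain ⟨T, hT⟩ := hev.exists_forall_of_atTop
    filter_upwards [eventually_ge_atTop (max T 0)] with t ht'
    have ht0 : (0:ℝ) ≤ t := le_trans (le_max_right _ _) ht'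
    by_contra hcon
    push_neg at hcon
    have hk := hkey t ht0 hcon
    have h1 : phiSol t < Lv + d * (ε₀/2)^2 := hT t (le_trans (le_max_left _ _) ht')
    have h2 : Lv ≤ phiSol (t+d) := hge (t+d) (by linarith)
    linarith
  -- final assembly
  refine ⟨sol, hsol0, hDeriv, hsolCS, ?_⟩
  by_contra hcon
  rw [Metric.tendsto_atTop] at hcon
  push_neg at hcon
  obtain ⟨ε₀, hε₀pos, hcon⟩ := hcon
  have hseq : ∀ n : ℕ, ∃ t : ℝ, (n:ℝ) ≤ t ∧
      ε₀ ≤ dist (infDist (sol t) {q | q ∈ ConfigSpace G ∧ F q = 0}) 0 := by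
    intro n
    obtain ⟨t, ht1, ht2⟩ := hcon (n:ℝ)
    exact ⟨t, ht1, ht2⟩
  choose u hu1 hu2 using hseq
  have hu0 : ∀ n, (0:ℝ) ≤ u n := fun n => le_trans (Nat.cast_nonneg n) (hu1 n)
  have hxK : ∀ n, sol (u n) ∈ K' := fun n => hsolK' _ (hu0 n)
  obtain ⟨z, hzK, ψ, hψ, hψtend⟩ := hK'c.tendsto_subseq hxK
  have hzCS : z ∈ ConfigSpace G := hK'U hzK
  have hFz : Tendsto (fun k => F (sol (u (ψ k)))) atTop (𝓝 (F z)) :=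
    ((contDiffAt_F hU hzCS).continuousAt.tendsto).comp hψtend
  have huψ : Tendsto (fun k => u (ψ k)) atTop atTop := by
    apply tendsto_atTop_mono _ tendsto_natCast_atTop_atTop
    intro k
    refine le_trans ?_ (hu1 (ψ k))
    exact_mod_cast hψ.le_apply
  have hF0 : Tendsto (fun k => F (sol (u (ψ k)))) atTop (𝓝 0) := hFtend.comp huψ
  have hFzeq : F z = 0 := tendsto_nhds_unique hFz hF0
  have hzE : z ∈ {q : Config (Fin N) | q ∈ ConfigSpace G ∧ F q = 0} := ⟨hzCS, hFzeq⟩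
  have hinf : ∀ k, ε₀ ≤ infDist (sol (u (ψ k))) {q | q ∈ ConfigSpace G ∧ F q = 0} := by
    intro k
    have h := hu2 (ψ k)
    rwa [Real.dist_eq, sub_zero, abs_of_nonneg infDist_nonneg] at h
  have hdist : Tendsto (fun k => dist (sol (u (ψ k))) z) atTop (𝓝 0) :=
    tendsto_iff_dist_tendsto_zero.mp hψtend
  have hev2 : ∀ᶠ k in atTop, dist (sol (u (ψ k))) z < ε₀ :=
    Filter.Tendsto.eventually_lt_const hε₀pos hdist
  obtain ⟨k, hk⟩ := hev2.exists
  exact absurd (le_trans (hinf k) (infDist_le_dist_of_mem hzE)) (not_le.mpr hk)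

end HelperSection

set_option maxHeartbeats 1000000 in
set_option synthInstance.maxHeartbeats 400000 in
theorem stmt_6 {N : ℕ} (G : SimpleGraph (Fin N))
    (f : Fin N → Fin N → ℝ → ℝ) (hsym : ∀ i j, f i j = f j i)
    (hU : ∀ i j, G.Adj i j → MemU (f i j))
    (p0 : Config (Fin N)) (hp0 : p0 ∈ ConfigSpace G) :
    ∃ sol : ℝ → Config (Fin N), sol 0 = p0 ∧
      (∀ t : ℝ, 0 ≤ t → HasDerivAt sol (formationField G.Adj f (sol t)) t) ∧
      (∀ t : ℝ, 0 ≤ t → sol t ∈ ConfigSpace G) ∧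
      Filter.Tendsto (fun t => Metric.infDist (sol t)
          {q : Config (Fin N) | q ∈ ConfigSpace G ∧ formationField G.Adj f q = 0})
        Filter.atTop (nhds 0) :=
  main_thm G f hsym hU p0 hp0

end
end

section
/- Let G be a triangulated Laman graph and p ∈ P_G. Then there exists a line-Laman partition of E (the 'independent partition' of (G,p)) that is coarsest among all line-Laman partitions: every line-Laman partition of E is a refinement of it (i.e., each of its parts is contained in some part of the independent partition). Moreover this coarsest line-Laman partition is unique. -/
open scoped BigOperators
open scoped Classical

noncomputable section

namespace IndepAux

open Finset

variable {N M : ℕ}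

lemma mem_vertexSet_iff {B : Finset (Sym2 (Fin N))} {v : Fin N} :
    v ∈ vertexSet B ↔ ∃ e ∈ B, v ∈ e := by
  simp [vertexSet]

lemma vertexSet_mono {B C : Finset (Sym2 (Fin N))} (h : B ⊆ C) :
    vertexSet B ⊆ vertexSet C := by
  intro v hv
  rw [mem_vertexSet_iff] at hv ⊢
  obtain ⟨e, he, hve⟩ := hv
  exact ⟨e, h he, hve⟩

lemma vertexSet_union (B C : Finset (Sym2 (Fin N))) :
    vertexSet (B ∪ C) = vertexSet B ∪ vertexSet C := by
  ext v
  simp only [mem_vertexSet_iff, Finset.mem_union]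
  constructor
  · rintro ⟨e, (he | he), hv⟩
    exacts [Or.inl ⟨e, he, hv⟩, Or.inr ⟨e, he, hv⟩]
  · rintro (⟨e, he, hv⟩ | ⟨e, he, hv⟩)
    exacts [⟨e, Or.inl he, hv⟩, ⟨e, Or.inr he, hv⟩]

lemma vertexSet_singleton (a b : Fin N) :
    vertexSet ({s(a, b)} : Finset (Sym2 (Fin N))) = {a, b} := by
  ext v
  simp [mem_vertexSet_iff, Sym2.mem_iff]

lemma vertexSet_insert (a b : Fin N) (B : Finset (Sym2 (Fin N))) :
    vertexSet (insert s(a, b) B) = insert a (insert b (vertexSet B)) := by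
  ext v
  simp only [mem_vertexSet_iff, Finset.mem_insert]
  constructor
  · rintro ⟨e, (rfl | he), hv⟩
    · rcases Sym2.mem_iff.1 hv with h | h
      exacts [Or.inl h, Or.inr (Or.inl h)]
    · exact Or.inr (Or.inr ⟨e, he, hv⟩)
  · rintro (rfl | rfl | hv)
    · exact ⟨s(v, b), Or.inl rfl, by simp⟩
    · exact ⟨s(a, v), Or.inl rfl, by simp⟩
    · obtain ⟨e, he, hve⟩ := hv
      exact ⟨e, Or.inr he, hve⟩

lemma vertexSet_image {f : Fin N → Fin M} (hf : Function.Injective f)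
    (B : Finset (Sym2 (Fin N))) :
    vertexSet (B.image (Sym2.map f)) = (vertexSet B).image f := by
  ext v
  simp only [mem_vertexSet_iff, Finset.mem_image]
  constructor
  · rintro ⟨e, ⟨e', he', rfl⟩, hv⟩
    obtain ⟨u, hu, rfl⟩ := Sym2.mem_map.1 hv
    exact ⟨u, ⟨e', he', hu⟩, rfl⟩
  · rintro ⟨u, hu, rfl⟩
    obtain ⟨e, he, hue⟩ := hu
    exact ⟨Sym2.map f e, ⟨e, he, rfl⟩, Sym2.mem_map.2 ⟨u, hue, rfl⟩⟩

/-- Tightness: the Laman count holds with equality. -/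
def Tight (B : Finset (Sym2 (Fin N))) : Prop :=
  B.card + 3 = 2 * (vertexSet B).card

lemma tight_singleton {a b : Fin N} (h : a ≠ b) :
    Tight ({s(a, b)} : Finset (Sym2 (Fin N))) := by
  rw [Tight, vertexSet_singleton, Finset.card_singleton,
    Finset.card_insert_of_notMem (by simpa using h), Finset.card_singleton]

/-- Inductive description of (edge sets of) triangulated Laman subgraphs. -/
inductive TL : {N : ℕ} → Finset (Sym2 (Fin N)) → Prop
  | single {N : ℕ} (i j : Fin N) (hne : i ≠ j) : TL {s(i, j)}
  | grow {N : ℕ} (B : Finset (Sym2 (Fin N))) (i j v : Fin N) (hne : i ≠ j)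
      (hij : s(i, j) ∈ B) (hv : v ∉ vertexSet B) (hB : TL B) :
      TL (insert s(v, i) (insert s(v, j) B))

lemma TL.map {f : Fin N → Fin M} (hf : Function.Injective f)
    {B : Finset (Sym2 (Fin N))} (h : TL B) : TL (B.image (Sym2.map f)) := by
  induction h with
  | single i j hne =>
      rw [Finset.image_singleton, Sym2.map_pair_eq]
      exact TL.single _ _ (fun hc => hne (hf hc))
  | grow B i j v hne hij hv hB IH =>
      rw [Finset.image_insert, Finset.image_insert, Sym2.map_pair_eq, Sym2.map_pair_eq]
      refine TL.grow _ _ _ _ (fun hc => hne (hf hc)) ?_ ?_ IH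
      · have := Finset.mem_image_of_mem (Sym2.map f) hij
        rwa [Sym2.map_pair_eq] at this
      · rw [vertexSet_image hf]
        intro hc
        obtain ⟨u, hu, hufv⟩ := Finset.mem_image.1 hc
        exact hv (hf hufv ▸ hu)

lemma sym2_map_castSucc_injective (n : ℕ) :
    Function.Injective (Sym2.map (Fin.castSucc : Fin n → Fin (n + 1))) :=
  Sym2.map.injective (Fin.castSucc_injective n)

/-- Pull back a set of edges avoiding the last vertex. -/
def pull (B : Finset (Sym2 (Fin (N + 1)))) : Finset (Sym2 (Fin N)) :=
  B.preimage (Sym2.map Fin.castSucc) ((sym2_map_castSucc_injective N).injOn)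

lemma mem_pull {B : Finset (Sym2 (Fin (N + 1)))} {e : Sym2 (Fin N)} :
    e ∈ pull B ↔ Sym2.map Fin.castSucc e ∈ B :=
  Finset.mem_preimage

lemma image_pull {B : Finset (Sym2 (Fin (N + 1)))} (h : Fin.last N ∉ vertexSet B) :
    (pull B).image (Sym2.map Fin.castSucc) = B := by
  ext e
  simp only [Finset.mem_image, mem_pull]
  constructor
  · rintro ⟨e', he', rfl⟩; exact he'
  · intro he
    induction e using Sym2.ind with
    | _ a b =>
      have ha : a ≠ Fin.last N := by
        rintro rfl
        exact h (mem_vertexSet_iff.2 ⟨_, he, by simp⟩)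
      have hb : b ≠ Fin.last N := by
        rintro rfl
        exact h (mem_vertexSet_iff.2 ⟨_, he, by simp⟩)
      obtain ⟨a', rfl⟩ := Fin.exists_castSucc_eq.2 ha
      obtain ⟨b', rfl⟩ := Fin.exists_castSucc_eq.2 hb
      exact ⟨s(a', b'), by rwa [Sym2.map_pair_eq], by rw [Sym2.map_pair_eq]⟩

lemma card_pull {B : Finset (Sym2 (Fin (N + 1)))} (h : Fin.last N ∉ vertexSet B) :
    (pull B).card = B.card := by
  conv_rhs => rw [← image_pull h]
  rw [Finset.card_image_of_injective _ (sym2_map_castSucc_injective N)]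

lemma card_vertexSet_pull {B : Finset (Sym2 (Fin (N + 1)))} (h : Fin.last N ∉ vertexSet B) :
    (vertexSet (pull B)).card = (vertexSet B).card := by
  conv_rhs => rw [← image_pull h, vertexSet_image (Fin.castSucc_injective N)]
  rw [Finset.card_image_of_injective _ (Fin.castSucc_injective N)]

lemma pull_nonempty {B : Finset (Sym2 (Fin (N + 1)))} (h : Fin.last N ∉ vertexSet B)
    (hne : B.Nonempty) : (pull B).Nonempty := by
  by_contra hc
  rw [Finset.not_nonempty_iff_eq_empty] at hc
  have := image_pull h
  rw [hc, Finset.image_empty] at this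
  exact hne.ne_empty this.symm

section GrowContext

variable {G' : SimpleGraph (Fin (N + 2))} {G : SimpleGraph (Fin (N + 3))} {j k : Fin (N + 2)}

lemma edges_at_last (h2 : ∀ a : Fin (N + 2), G.Adj a.castSucc (Fin.last (N + 2)) ↔ a = j ∨ a = k)
    {e : Sym2 (Fin (N + 3))} (he : e ∈ G.edgeSet) (hL : Fin.last (N + 2) ∈ e) :
    e = s(j.castSucc, Fin.last (N + 2)) ∨ e = s(k.castSucc, Fin.last (N + 2)) := by
  induction e using Sym2.ind with
  | _ x y =>
    rw [SimpleGraph.mem_edgeSet] at he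
    rcases Sym2.mem_iff.1 hL with rfl | rfl
    · have hy : y ≠ Fin.last (N + 2) := fun hc => G.irrefl (hc ▸ he)
      obtain ⟨b, rfl⟩ := Fin.exists_castSucc_eq.2 hy
      rcases (h2 b).1 he.symm with rfl | rfl
      · exact Or.inl (Sym2.eq_swap)
      · exact Or.inr (Sym2.eq_swap)
    · have hx : x ≠ Fin.last (N + 2) := fun hc => G.irrefl (hc ▸ he)
      obtain ⟨b, rfl⟩ := Fin.exists_castSucc_eq.2 hx
      rcases (h2 b).1 he with rfl | rfl
      · exact Or.inl rfl
      · exact Or.inr rfl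

lemma pull_subset_edgeSet
    (h1 : ∀ a b : Fin (N + 2), G.Adj a.castSucc b.castSucc ↔ G'.Adj a b)
    {B : Finset (Sym2 (Fin (N + 3)))} (hB : ↑B ⊆ G.edgeSet)
    (h : Fin.last (N + 2) ∉ vertexSet B) :
    ↑(pull B) ⊆ G'.edgeSet := by
  intro e he
  rw [Finset.mem_coe, mem_pull] at he
  induction e using Sym2.ind with
  | _ a b =>
    rw [Sym2.map_pair_eq] at he
    have := hB he
    rw [SimpleGraph.mem_edgeSet] at this ⊢
    exact (h1 a b).1 this

end GrowContext

lemma vertexSet_card_ge_two {B : Finset (Sym2 (Fin N))} {e : Sym2 (Fin N)}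
    (he : e ∈ B) (hd : ¬ e.IsDiag) : 2 ≤ (vertexSet B).card := by
  induction e using Sym2.ind with
  | _ a b =>
    rw [Sym2.mk_isDiag_iff] at hd
    have ha : a ∈ vertexSet B := mem_vertexSet_iff.2 ⟨_, he, by simp⟩
    have hb : b ∈ vertexSet B := mem_vertexSet_iff.2 ⟨_, he, by simp⟩
    calc 2 = ({a, b} : Finset (Fin N)).card := by
            rw [Finset.card_insert_of_notMem (by simpa using hd), Finset.card_singleton]
      _ ≤ _ := Finset.card_le_card (by
            intro x hx
            rcases Finset.mem_insert.1 hx with rfl | hx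
            · exact ha
            · rw [Finset.mem_singleton] at hx
              exact hx ▸ hb)

lemma sparsity_small {B : Finset (Sym2 (Fin N))} (hd : ∀ e ∈ B, ¬ e.IsDiag)
    (hcard : B.card ≤ 2) (hne : B.Nonempty) :
    B.card + 3 ≤ 2 * (vertexSet B).card := by
  interval_cases h : B.card
  · exact absurd (Finset.card_eq_zero.1 h) hne.ne_empty
  · obtain ⟨e, he⟩ := Finset.card_eq_one.1 h
    have := vertexSet_card_ge_two (he ▸ Finset.mem_singleton_self e) (hd e (he ▸ Finset.mem_singleton_self e))
    omega
  · obtain ⟨e, f, hef, hB⟩ := Finset.card_eq_two.1 h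
    have heB : e ∈ B := hB ▸ Finset.mem_insert_self _ _
    have hfB : f ∈ B := hB ▸ Finset.mem_insert_of_mem (Finset.mem_singleton_self f)
    -- show the vertex set has at least 3 elements
    have h3 : 3 ≤ (vertexSet B).card := by
      by_contra hc
      push_neg at hc
      induction e using Sym2.ind with
      | _ a b =>
        induction f using Sym2.ind with
        | _ c d =>
          have hab : a ≠ b := by simpa [Sym2.mk_isDiag_iff] using hd _ heB
          have hcd : c ≠ d := by simpa [Sym2.mk_isDiag_iff] using hd _ hfB
          have hsub : ({a, b} : Finset (Fin N)) ⊆ vertexSet B := by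
            intro x hx
            rcases Finset.mem_insert.1 hx with rfl | hx
            · exact mem_vertexSet_iff.2 ⟨_, heB, by simp⟩
            · rw [Finset.mem_singleton] at hx
              exact mem_vertexSet_iff.2 ⟨_, heB, by simp [hx]⟩
          have hcardab : ({a, b} : Finset (Fin N)).card = 2 := by
            rw [Finset.card_insert_of_notMem (by simpa using hab), Finset.card_singleton]
          have hVeq : vertexSet B = {a, b} :=
            (Finset.eq_of_subset_of_card_le hsub (by omega)).symm
          have hc' : c ∈ ({a, b} : Finset (Fin N)) :=
            hVeq ▸ mem_vertexSet_iff.2 ⟨_, hfB, by simp⟩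
          have hd' : d ∈ ({a, b} : Finset (Fin N)) :=
            hVeq ▸ mem_vertexSet_iff.2 ⟨_, hfB, by simp⟩
          simp only [Finset.mem_insert, Finset.mem_singleton] at hc' hd'
          apply hef
          rcases hc' with rfl | rfl <;> rcases hd' with rfl | rfl
          · exact absurd rfl hcd
          · rfl
          · exact Sym2.eq_swap
          · exact absurd rfl hcd
    omega

theorem sparsity {n : ℕ} {G : SimpleGraph (Fin n)} (hG : IsTriangulatedLaman G) :
    ∀ B : Finset (Sym2 (Fin n)), ↑B ⊆ G.edgeSet → B.Nonempty →
      B.card + 3 ≤ 2 * (vertexSet B).card := by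
  induction hG with
  | base =>
      intro B hB hne
      refine sparsity_small (fun e he => SimpleGraph.not_isDiag_of_mem_edgeSet _ (hB he)) ?_ hne
      have hsub : B ⊆ {s((0 : Fin 2), 1)} := by
        intro e he
        have hadj := hB he
        induction e using Sym2.ind with
        | _ x y =>
          rw [SimpleGraph.mem_edgeSet, SimpleGraph.top_adj] at hadj
          have : ∀ x y : Fin 2, x ≠ y → s(x, y) = s((0 : Fin 2), 1) := by decide
          simp [this x y hadj]
      exact (Finset.card_le_card hsub).trans (by simp)
  | @grow n G' G j k hG' hjk h1 h2 IH =>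
      intro B hB hne
      set Bv := B.filter (fun e => Fin.last (n + 2) ∈ e) with hBvdef
      set B0 := B.filter (fun e => ¬ Fin.last (n + 2) ∈ e) with hB0def
      have hsplit : Bv.card + B0.card = B.card :=
        Finset.card_filter_add_card_filter_not _
      have hBv2 : Bv.card ≤ 2 := by
        have hsub : Bv ⊆ {s(j.castSucc, Fin.last (n + 2)), s(k.castSucc, Fin.last (n + 2))} := by
          intro e he
          rw [hBvdef, Finset.mem_filter] at he
          rcases edges_at_last h2 (hB he.1) he.2 with rfl | rfl <;> simp
        exact (Finset.card_le_card hsub).trans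
          ((Finset.card_insert_le _ _).trans (by simp))
      by_cases hB0ne : B0.Nonempty
      · have hlast0 : Fin.last (n + 2) ∉ vertexSet B0 := by
          intro hc
          obtain ⟨e, he, hLe⟩ := mem_vertexSet_iff.1 hc
          exact (Finset.mem_filter.1 he).2 hLe
        have hB0sub : ↑B0 ⊆ G.edgeSet := fun e he =>
          hB (Finset.filter_subset _ _ he)
        have hpull := IH (pull B0) (pull_subset_edgeSet h1 hB0sub hlast0)
          (pull_nonempty hlast0 hB0ne)
        rw [card_pull hlast0, card_vertexSet_pull hlast0] at hpull
        by_cases hBvne : Bv.Nonempty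
        · obtain ⟨e, heBv⟩ := hBvne
          rw [hBvdef, Finset.mem_filter] at heBv
          have hLmem : Fin.last (n + 2) ∈ vertexSet B :=
            mem_vertexSet_iff.2 ⟨e, heBv.1, heBv.2⟩
          have hVsub : insert (Fin.last (n + 2)) (vertexSet B0) ⊆ vertexSet B :=
            Finset.insert_subset hLmem (vertexSet_mono (Finset.filter_subset _ _))
          have hVcard : (insert (Fin.last (n + 2)) (vertexSet B0)).card
              = (vertexSet B0).card + 1 := Finset.card_insert_of_notMem hlast0
          have hle := Finset.card_le_card hVsub
          omega
        · have hBvcard : Bv.card = 0 := by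
            rw [Finset.not_nonempty_iff_eq_empty] at hBvne
            rw [hBvne, Finset.card_empty]
          have hBeq : B0 = B :=
            Finset.eq_of_subset_of_card_le (Finset.filter_subset _ _) (by omega)
          rw [hBeq] at hpull
          omega
      · have hB0card : B0.card = 0 := by
          rw [Finset.not_nonempty_iff_eq_empty] at hB0ne
          rw [hB0ne, Finset.card_empty]
        exact sparsity_small (fun e he => SimpleGraph.not_isDiag_of_mem_edgeSet _ (hB he))
          (by omega) hne

set_option maxHeartbeats 2000000 in
theorem tight_TL {n : ℕ} {G : SimpleGraph (Fin n)} (hG : IsTriangulatedLaman G) :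
    ∀ B : Finset (Sym2 (Fin n)), ↑B ⊆ G.edgeSet → Tight B → TL B := by
  induction hG with
  | base =>
      intro B hB ht
      have hsub : B ⊆ {s((0 : Fin 2), 1)} := by
        intro e he
        have hadj := hB he
        induction e using Sym2.ind with
        | _ x y =>
          rw [SimpleGraph.mem_edgeSet, SimpleGraph.top_adj] at hadj
          have : ∀ x y : Fin 2, x ≠ y → s(x, y) = s((0 : Fin 2), 1) := by decide
          simp [this x y hadj]
      rcases Finset.subset_singleton_iff.1 hsub with rfl | rfl
      · exfalso
        have hv : vertexSet (∅ : Finset (Sym2 (Fin 2))) = ∅ := by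
          ext v; simp [mem_vertexSet_iff]
        rw [Tight, hv] at ht
        simp at ht
      · exact TL.single 0 1 (by decide)
  | @grow n G' G j k hG' hjk h1 h2 IH =>
      intro B hB ht
      set L := Fin.last (n + 2) with hLdef
      have hjcL : j.castSucc ≠ L := (Fin.castSucc_lt_last j).ne
      have hkcL : k.castSucc ≠ L := (Fin.castSucc_lt_last k).ne
      have hjck : j.castSucc ≠ k.castSucc := fun h => hjk.ne (Fin.castSucc_injective _ h)
      by_cases hL : L ∈ vertexSet B
      · -- the new vertex is used
        set B0 := B.filter (fun e => ¬ L ∈ e) with hB0def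
        have hB0subB : B0 ⊆ B := Finset.filter_subset _ _
        have hB0sub : ↑B0 ⊆ G.edgeSet := fun e he => hB (hB0subB he)
        have hlast0 : L ∉ vertexSet B0 := by
          intro hc
          obtain ⟨e, he, hLe⟩ := mem_vertexSet_iff.1 hc
          exact (Finset.mem_filter.1 he).2 hLe
        have hmemB0 : ∀ e ∈ B, ¬ L ∈ e → e ∈ B0 := fun e he hLe =>
          Finset.mem_filter.2 ⟨he, hLe⟩
        have hinsLsub : insert L (vertexSet B0) ⊆ vertexSet B :=
          Finset.insert_subset hL (vertexSet_mono hB0subB)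
        have hVlow : (vertexSet B0).card + 1 ≤ (vertexSet B).card := by
          have := Finset.card_le_card hinsLsub
          rwa [Finset.card_insert_of_notMem hlast0] at this
        have hatlast : ∀ e ∈ B, L ∈ e → e = s(j.castSucc, L) ∨ e = s(k.castSucc, L) :=
          fun e he hLe => edges_at_last h2 (hB he) hLe
        -- TL for B0 will come from the IH
        have hTLB0 : Tight B0 → B0.Nonempty → TL B0 := by
          intro ht0 hne0
          have htp : Tight (pull B0) := by
            rw [Tight, card_pull hlast0, card_vertexSet_pull hlast0]; exact ht0
          have := (IH (pull B0) (pull_subset_edgeSet h1 hB0sub hlast0) htp).map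
            (Fin.castSucc_injective (n + 2))
          rwa [image_pull hlast0] at this
        by_cases he1 : s(j.castSucc, L) ∈ B <;> by_cases he2 : s(k.castSucc, L) ∈ B
        · -- both edges at the new vertex are present
          have hBeq : B = insert s(L, j.castSucc) (insert s(L, k.castSucc) B0) := by
            ext e
            simp only [Finset.mem_insert]
            constructor
            · intro he
              by_cases hLe : L ∈ e
              · rcases hatlast e he hLe with rfl | rfl
                · exact Or.inl Sym2.eq_swap
                · exact Or.inr (Or.inl Sym2.eq_swap)
              · exact Or.inr (Or.inr (hmemB0 e he hLe))
            · rintro (rfl | rfl | h)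
              · rwa [Sym2.eq_swap]
              · rwa [Sym2.eq_swap]
              · exact hB0subB h
          have hLj0 : s(L, j.castSucc) ∉ insert s(L, k.castSucc) B0 := by
            simp only [Finset.mem_insert]
            rintro (hc | hc)
            · exact hjck (by simpa [Sym2.eq_iff, hjcL, Ne.symm hkcL] using hc)
            · exact hlast0 (mem_vertexSet_iff.2 ⟨_, hc, by simp⟩)
          have hLk0 : s(L, k.castSucc) ∉ B0 :=
            fun hc => hlast0 (mem_vertexSet_iff.2 ⟨_, hc, by simp⟩)
          have hcardB : B.card = B0.card + 2 := by
            rw [hBeq, Finset.card_insert_of_notMem hLj0, Finset.card_insert_of_notMem hLk0]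
          have hVBeq : vertexSet B = insert L (insert j.castSucc (insert k.castSucc (vertexSet B0))) := by
            rw [hBeq, vertexSet_insert, vertexSet_insert]
            ext x; simp only [Finset.mem_insert]; tauto
          have hne0 : B0.Nonempty := by
            rcases Finset.eq_empty_or_nonempty B0 with h0 | h0
            · exfalso
              rw [Tight, hcardB, h0, Finset.card_empty] at ht
              omega
            · exact h0
          have hspars0 := sparsity hG' _ (pull_subset_edgeSet h1 hB0sub hlast0)
            (pull_nonempty hlast0 hne0)
          rw [card_pull hlast0, card_vertexSet_pull hlast0] at hspars0
          have hVhigh : (vertexSet B).card ≤ (vertexSet B0).card + 1 := by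
            rw [Tight, hcardB] at ht
            omega
          have hVeq : vertexSet B = insert L (vertexSet B0) :=
            (Finset.eq_of_subset_of_card_le hinsLsub (by
              rw [Finset.card_insert_of_notMem hlast0]; omega)).symm
          have hjc0 : j.castSucc ∈ vertexSet B0 := by
            have : j.castSucc ∈ vertexSet B := mem_vertexSet_iff.2 ⟨_, he1, by simp⟩
            rw [hVeq, Finset.mem_insert] at this
            exact this.resolve_left hjcL
          have hkc0 : k.castSucc ∈ vertexSet B0 := by
            have : k.castSucc ∈ vertexSet B := mem_vertexSet_iff.2 ⟨_, he2, by simp⟩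
            rw [hVeq, Finset.mem_insert] at this
            exact this.resolve_left hkcL
          have ht0 : Tight B0 := by
            rw [Tight]
            rw [Tight, hcardB, hVeq, Finset.card_insert_of_notMem hlast0] at ht
            omega
          -- the edge between j and k must be present in B0
          have hjk0 : s(j.castSucc, k.castSucc) ∈ B0 := by
            by_contra hc
            have hB1sub : ↑(insert s(j.castSucc, k.castSucc) B0) ⊆ G.edgeSet := by
              rw [Finset.coe_insert, Set.insert_subset_iff]
              exact ⟨(SimpleGraph.mem_edgeSet G).2 ((h1 j k).2 hjk), hB0sub⟩
            have hsp := sparsity (IsTriangulatedLaman.grow G' G j k hG' hjk h1 h2) _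
              hB1sub ⟨_, Finset.mem_insert_self _ _⟩
            rw [Finset.card_insert_of_notMem hc, vertexSet_insert,
              Finset.insert_eq_self.2 hkc0, Finset.insert_eq_self.2 hjc0] at hsp
            rw [Tight] at ht0
            omega
          rw [hBeq]
          exact TL.grow B0 j.castSucc k.castSucc L hjck hjk0 hlast0 (hTLB0 ht0 hne0)
        · -- only the edge to j is present
          have hBeq : B = insert s(j.castSucc, L) B0 := by
            ext e
            simp only [Finset.mem_insert]
            constructor
            · intro he
              by_cases hLe : L ∈ e
              · rcases hatlast e he hLe with rfl | rfl
                · exact Or.inl rfl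
                · exact absurd he he2
              · exact Or.inr (hmemB0 e he hLe)
            · rintro (rfl | h)
              · exact he1
              · exact hB0subB h
          have hjL0 : s(j.castSucc, L) ∉ B0 :=
            fun hc => hlast0 (mem_vertexSet_iff.2 ⟨_, hc, by simp⟩)
          have hcardB : B.card = B0.card + 1 := by
            rw [hBeq, Finset.card_insert_of_notMem hjL0]
          rcases Finset.eq_empty_or_nonempty B0 with h0 | h0
          · rw [hBeq, h0]
            exact TL.single j.castSucc L hjcL
          · exfalso
            have hspars0 := sparsity hG' _ (pull_subset_edgeSet h1 hB0sub hlast0)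
              (pull_nonempty hlast0 h0)
            rw [card_pull hlast0, card_vertexSet_pull hlast0] at hspars0
            rw [Tight, hcardB] at ht
            omega
        · -- only the edge to k is present
          have hBeq : B = insert s(k.castSucc, L) B0 := by
            ext e
            simp only [Finset.mem_insert]
            constructor
            · intro he
              by_cases hLe : L ∈ e
              · rcases hatlast e he hLe with rfl | rfl
                · exact absurd he he1
                · exact Or.inl rfl
              · exact Or.inr (hmemB0 e he hLe)
            · rintro (rfl | h)
              · exact he2
              · exact hB0subB h
          have hkL0 : s(k.castSucc, L) ∉ B0 :=
            fun hc => hlast0 (mem_vertexSet_iff.2 ⟨_, hc, by simp⟩)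
          have hcardB : B.card = B0.card + 1 := by
            rw [hBeq, Finset.card_insert_of_notMem hkL0]
          rcases Finset.eq_empty_or_nonempty B0 with h0 | h0
          · rw [hBeq, h0]
            exact TL.single k.castSucc L hkcL
          · exfalso
            have hspars0 := sparsity hG' _ (pull_subset_edgeSet h1 hB0sub hlast0)
              (pull_nonempty hlast0 h0)
            rw [card_pull hlast0, card_vertexSet_pull hlast0] at hspars0
            rw [Tight, hcardB] at ht
            omega
        · -- no edge at the new vertex: contradicts hL
          exfalso
          obtain ⟨e, he, hLe⟩ := mem_vertexSet_iff.1 hL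
          rcases hatlast e he hLe with rfl | rfl
          · exact he1 he
          · exact he2 he
      · -- the new vertex is unused: pull everything back
        have htp : Tight (pull B) := by
          rw [Tight, card_pull hL, card_vertexSet_pull hL]; exact ht
        have := (IH (pull B) (pull_subset_edgeSet h1 hB hL) htp).map
          (Fin.castSucc_injective (n + 2))
        rwa [image_pull hL] at this

lemma inducedSubgraph_adj {B : Finset (Sym2 (Fin N))} {x y : ↥(vertexSet B)} :
    (inducedSubgraph B).Adj x y ↔ s((x : Fin N), (y : Fin N)) ∈ B ∧ x ≠ y := by
  rw [inducedSubgraph, SimpleGraph.fromEdgeSet_adj]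
  rw [Set.mem_setOf_eq, Sym2.map_pair_eq]

lemma mem_image_castSucc {m : ℕ} (S : Set (Sym2 (Fin m))) (a b : Fin m) :
    s(a.castSucc, b.castSucc) ∈ Sym2.map Fin.castSucc '' S ↔ s(a, b) ∈ S := by
  constructor
  · rintro ⟨e', he', heq⟩
    have he2 : e' = s(a, b) := by
      apply sym2_map_castSucc_injective m
      rw [heq, Sym2.map_pair_eq]
    exact he2 ▸ he'
  · intro h
    exact ⟨s(a, b), h, by rw [Sym2.map_pair_eq]⟩

lemma last_not_mem_image_castSucc {m : ℕ} (S : Set (Sym2 (Fin m))) (x : Fin (m + 1)) :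
    s(x, Fin.last m) ∉ Sym2.map Fin.castSucc '' S := by
  rintro ⟨e', -, heq⟩
  have hmem : Fin.last m ∈ Sym2.map Fin.castSucc e' := by
    rw [heq]; simp
  obtain ⟨u, -, hu⟩ := Sym2.mem_map.1 hmem
  exact (Fin.castSucc_lt_last u).ne hu

set_option maxHeartbeats 2000000 in
theorem TL_induced {B : Finset (Sym2 (Fin N))} (h : TL B) :
    ∃ (K : ℕ) (H : SimpleGraph (Fin (K + 2))), IsTriangulatedLaman H ∧
      Nonempty (inducedSubgraph B ≃g H) := by
  induction h with
  | single i j hne =>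
      have hval : ∀ x : ↥(vertexSet ({s(i, j)} : Finset (Sym2 (Fin N)))),
          (x : Fin N) = i ∨ (x : Fin N) = j := by
        intro x
        obtain ⟨e, he, hxe⟩ := mem_vertexSet_iff.1 x.2
        rw [Finset.mem_singleton] at he
        subst he
        exact Sym2.mem_iff.1 hxe
      have hcard : Fintype.card ↥(vertexSet ({s(i, j)} : Finset (Sym2 (Fin N)))) = 2 := by
        rw [Fintype.card_coe, vertexSet_singleton,
          Finset.card_insert_of_notMem (by simpa using hne), Finset.card_singleton]
      let e := Fintype.equivFinOfCardEq hcard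
      refine ⟨0, ⊤, IsTriangulatedLaman.base, ⟨⟨e, ?_⟩⟩⟩
      intro x y
      simp only [SimpleGraph.top_adj, ne_eq, EmbeddingLike.apply_eq_iff_eq]
      rw [inducedSubgraph_adj]
      constructor
      · intro hxy
        refine ⟨?_, hxy⟩
        have hvne : (x : Fin N) ≠ (y : Fin N) := fun hc => hxy (Subtype.ext hc)
        rcases hval x with hx | hx <;> rcases hval y with hy | hy
        · exact absurd (hx.trans hy.symm) hvne
        · rw [hx, hy]; simp
        · rw [hx, hy, Sym2.eq_swap]; simp
        · exact absurd (hx.trans hy.symm) hvne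
      · rintro ⟨-, hxy⟩
        exact hxy
  | grow B i j v hne hij hv hB IH =>
      obtain ⟨K, H, hH, ⟨φ⟩⟩ := IH
      have hi : i ∈ vertexSet B := mem_vertexSet_iff.2 ⟨_, hij, by simp⟩
      have hj : j ∈ vertexSet B := mem_vertexSet_iff.2 ⟨_, hij, by simp⟩
      have hvi : v ≠ i := fun hc => hv (hc ▸ hi)
      have hvj : v ≠ j := fun hc => hv (hc ▸ hj)
      set B2 := insert s(v, i) (insert s(v, j) B) with hB2def
      set a' : Fin (K + 2) := φ ⟨i, hi⟩ with ha'def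
      set b' : Fin (K + 2) := φ ⟨j, hj⟩ with hb'def
      set L2 := Fin.last (K + 2) with hL2def
      have hlast_ne : ∀ a : Fin (K + 2), a.castSucc ≠ L2 := fun a => (Fin.castSucc_lt_last a).ne
      set H2 : SimpleGraph (Fin (K + 3)) := SimpleGraph.fromEdgeSet
        ({s(L2, a'.castSucc), s(L2, b'.castSucc)} ∪ Sym2.map Fin.castSucc '' H.edgeSet)
        with hH2def
      have adj_cast : ∀ a b : Fin (K + 2), H2.Adj a.castSucc b.castSucc ↔ H.Adj a b := by
        intro a b
        rw [hH2def, SimpleGraph.fromEdgeSet_adj]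
        constructor
        · rintro ⟨hmem, hne2⟩
          rcases hmem with hp | himg
          · exfalso
            rcases hp with hp | hp
            · rcases Sym2.eq_iff.1 hp with ⟨h1, -⟩ | ⟨-, h2⟩
              exacts [hlast_ne a h1, hlast_ne b h2]
            · rw [Set.mem_singleton_iff] at hp
              rcases Sym2.eq_iff.1 hp with ⟨h1, -⟩ | ⟨-, h2⟩
              exacts [hlast_ne a h1, hlast_ne b h2]
          · exact (mem_image_castSucc _ a b).1 himg
        · intro hadj
          refine ⟨Or.inr ((mem_image_castSucc _ a b).2 hadj), ?_⟩
          exact fun hc => hadj.ne (Fin.castSucc_injective _ hc)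
      have adj_last : ∀ a : Fin (K + 2), H2.Adj a.castSucc L2 ↔ a = a' ∨ a = b' := by
        intro a
        rw [hH2def, SimpleGraph.fromEdgeSet_adj]
        constructor
        · rintro ⟨hmem, -⟩
          rcases hmem with hp | himg
          · rcases hp with hp | hp
            · rcases Sym2.eq_iff.1 hp with ⟨h1, -⟩ | ⟨h1, -⟩
              · exact absurd h1 (hlast_ne a)
              · exact Or.inl (Fin.castSucc_injective _ h1)
            · rw [Set.mem_singleton_iff] at hp
              rcases Sym2.eq_iff.1 hp with ⟨h1, -⟩ | ⟨h1, -⟩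
              · exact absurd h1 (hlast_ne a)
              · exact Or.inr (Fin.castSucc_injective _ h1)
          · exact absurd himg (last_not_mem_image_castSucc _ _)
        · rintro (rfl | rfl)
          · exact ⟨Or.inl (Or.inl Sym2.eq_swap), hlast_ne a'⟩
          · exact ⟨Or.inl (Or.inr (Set.mem_singleton_iff.2 Sym2.eq_swap)), hlast_ne b'⟩
      have hadjab : H.Adj a' b' := by
        rw [ha'def, hb'def, φ.map_rel_iff, inducedSubgraph_adj]
        exact ⟨hij, fun hc => hne (congrArg Subtype.val hc)⟩
      have hH2laman : IsTriangulatedLaman H2 :=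
        IsTriangulatedLaman.grow H H2 a' b' hH hadjab adj_cast adj_last
      have hvm : v ∈ vertexSet B2 :=
        mem_vertexSet_iff.2 ⟨s(v, i), by rw [hB2def]; exact Finset.mem_insert_self _ _, by simp⟩
      have hBsubB2 : B ⊆ B2 := by
        rw [hB2def]
        exact (Finset.subset_insert _ _).trans (Finset.subset_insert _ _)
      have hsub : ∀ {u : Fin N}, u ∈ vertexSet B → u ∈ vertexSet B2 :=
        fun hu => vertexSet_mono hBsubB2 hu
      have hmemB : ∀ x : ↥(vertexSet B2), (x : Fin N) ≠ v → (x : Fin N) ∈ vertexSet B := by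
        intro x hx
        obtain ⟨e, he, hxe⟩ := mem_vertexSet_iff.1 x.2
        rw [hB2def, Finset.mem_insert, Finset.mem_insert] at he
        rcases he with rfl | rfl | he
        · rcases Sym2.mem_iff.1 hxe with h | h
          · exact absurd h hx
          · exact h ▸ hi
        · rcases Sym2.mem_iff.1 hxe with h | h
          · exact absurd h hx
          · exact h ▸ hj
        · exact mem_vertexSet_iff.2 ⟨e, he, hxe⟩
      have hφeq : ∀ (u : Fin N) (hm : u ∈ vertexSet B),
          (φ ⟨u, hm⟩ = a' ∨ φ ⟨u, hm⟩ = b') ↔ (u = i ∨ u = j) := by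
        intro u hm
        rw [ha'def, hb'def, EmbeddingLike.apply_eq_iff_eq, EmbeddingLike.apply_eq_iff_eq]
        simp [Subtype.ext_iff]
      refine ⟨K + 1, H2, hH2laman, ⟨?_⟩⟩
      refine ⟨⟨fun x => if hx : (x : Fin N) = v then L2 else (φ ⟨x, hmemB x hx⟩).castSucc,
        fun y => if hy : y = L2 then ⟨v, hvm⟩
          else ⟨(φ.symm (y.castPred hy) : ↥(vertexSet B)), hsub (φ.symm (y.castPred hy)).2⟩,
        ?_, ?_⟩, ?_⟩
      · intro x
        try dsimp only
        by_cases hx : (x : Fin N) = v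
        · rw [dif_pos hx, dif_pos rfl]
          exact Subtype.ext hx.symm
        · rw [dif_neg hx, dif_neg (hlast_ne _)]
          apply Subtype.ext
          dsimp only
          rw [Fin.castPred_castSucc, RelIso.symm_apply_apply]
      · intro y
        try dsimp only
        by_cases hy : y = L2
        · subst hy
          rw [dif_pos rfl, dif_pos rfl]
        · rw [dif_neg hy]
          try dsimp only
          have hwv : ((φ.symm (y.castPred hy) : ↥(vertexSet B)) : Fin N) ≠ v := by
            intro hc
            exact hv (hc ▸ (φ.symm (y.castPred hy)).2)
          rw [dif_neg hwv]
          have h3 : ∀ (hm : ((φ.symm (y.castPred hy) : ↥(vertexSet B)) : Fin N) ∈ vertexSet B),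
              (φ ⟨((φ.symm (y.castPred hy) : ↥(vertexSet B)) : Fin N), hm⟩).castSucc = y := by
            intro hm
            have heq : (⟨((φ.symm (y.castPred hy) : ↥(vertexSet B)) : Fin N), hm⟩ :
                ↥(vertexSet B)) = φ.symm (y.castPred hy) := Subtype.ext rfl
            rw [heq, RelIso.apply_symm_apply, Fin.castSucc_castPred]
          exact h3 _
      · intro x y
        simp only [Equiv.coe_fn_mk]
        try dsimp only
        rw [inducedSubgraph_adj]
        have hmemB2 : ∀ e : Sym2 (Fin N), e ∈ B2 ↔
            (e = s(v, i) ∨ e = s(v, j) ∨ e ∈ B) := by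
          intro e
          rw [hB2def, Finset.mem_insert, Finset.mem_insert]
        by_cases hx : (x : Fin N) = v <;> by_cases hy : (y : Fin N) = v
        · -- both equal v
          have hxy : x = y := Subtype.ext (hx.trans hy.symm)
          rw [dif_pos hx, dif_pos hy]
          exact iff_of_false H2.irrefl (fun hc => hc.2 hxy)
        · -- x = v, y ≠ v
          rw [dif_pos hx, dif_neg hy, SimpleGraph.adj_comm, adj_last, hφeq, hmemB2 _]
          constructor
          · rintro (h | h)
            · refine ⟨Or.inl ?_, fun hc => hy ((congrArg Subtype.val hc).symm.trans hx)⟩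
              rw [Sym2.eq_iff]
              exact Or.inl ⟨hx, h⟩
            · refine ⟨Or.inr (Or.inl ?_), fun hc => hy ((congrArg Subtype.val hc).symm.trans hx)⟩
              rw [Sym2.eq_iff]
              exact Or.inl ⟨hx, h⟩
          · rintro ⟨h | h | h, -⟩
            · rcases Sym2.eq_iff.1 h with ⟨-, h2⟩ | ⟨h1, h2⟩
              · exact Or.inl h2
              · exact absurd h2 hy
            · rcases Sym2.eq_iff.1 h with ⟨-, h2⟩ | ⟨h1, h2⟩
              · exact Or.inr h2
              · exact absurd h2 hy
            · exfalso
              exact hv (mem_vertexSet_iff.2 ⟨_, h, by rw [Sym2.mem_iff]; exact Or.inl hx.symm⟩)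
        · -- x ≠ v, y = v
          rw [dif_neg hx, dif_pos hy, adj_last, hφeq, hmemB2 _]
          constructor
          · rintro (h | h)
            · refine ⟨Or.inl ?_, fun hc => hx ((congrArg Subtype.val hc).trans hy)⟩
              rw [Sym2.eq_iff]
              exact Or.inr ⟨h, hy⟩
            · refine ⟨Or.inr (Or.inl ?_), fun hc => hx ((congrArg Subtype.val hc).trans hy)⟩
              rw [Sym2.eq_iff]
              exact Or.inr ⟨h, hy⟩
          · rintro ⟨h | h | h, -⟩
            · rcases Sym2.eq_iff.1 h with ⟨h1, -⟩ | ⟨h1, -⟩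
              · exact absurd h1 hx
              · exact Or.inl h1
            · rcases Sym2.eq_iff.1 h with ⟨h1, -⟩ | ⟨h1, -⟩
              · exact absurd h1 hx
              · exact Or.inr h1
            · exfalso
              exact hv (mem_vertexSet_iff.2 ⟨_, h, by rw [Sym2.mem_iff]; exact Or.inr hy.symm⟩)
        · -- neither is v
          rw [dif_neg hx, dif_neg hy, adj_cast, φ.map_rel_iff, inducedSubgraph_adj, hmemB2 _]
          constructor
          · rintro ⟨hmem, hne2⟩
            refine ⟨Or.inr (Or.inr hmem), ?_⟩
            exact fun hc => hne2 (Subtype.ext ((congrArg Subtype.val hc : (x : Fin N) = (y : Fin N))))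
          · rintro ⟨h | h | h, hne2⟩
            · exfalso
              rcases Sym2.eq_iff.1 h with ⟨h1, -⟩ | ⟨-, h1⟩
              exacts [hx h1, hy h1]
            · exfalso
              rcases Sym2.eq_iff.1 h with ⟨h1, -⟩ | ⟨-, h1⟩
              exacts [hx h1, hy h1]
            · exact ⟨h, fun hc => hne2 (Subtype.ext (congrArg (Subtype.val : ↥(vertexSet B) → Fin N) hc))⟩

theorem tlaman_count {M : ℕ} {H : SimpleGraph (Fin M)} (hH : IsTriangulatedLaman H) :
    H.edgeSet.ncard + 3 = 2 * M := by
  induction hH with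
  | base =>
      have hset : (⊤ : SimpleGraph (Fin 2)).edgeSet = {s((0 : Fin 2), 1)} := by
        ext e
        induction e using Sym2.ind with
        | _ x y =>
          rw [SimpleGraph.mem_edgeSet, SimpleGraph.top_adj, Set.mem_singleton_iff]
          constructor
          · intro h
            have : ∀ x y : Fin 2, x ≠ y → s(x, y) = s((0 : Fin 2), 1) := by decide
            exact this x y h
          · intro h
            have : ∀ x y : Fin 2, s(x, y) = s((0 : Fin 2), 1) → x ≠ y := by decide
            exact this x y h
      rw [hset, Set.ncard_singleton]
  | @grow n G' G j k hG' hjk h1 h2 IH =>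
      have hjcL : j.castSucc ≠ Fin.last (n + 2) := (Fin.castSucc_lt_last j).ne
      have hkcL : k.castSucc ≠ Fin.last (n + 2) := (Fin.castSucc_lt_last k).ne
      have hjck : j.castSucc ≠ k.castSucc := fun h => hjk.ne (Fin.castSucc_injective _ h)
      have hset : G.edgeSet = Sym2.map Fin.castSucc '' G'.edgeSet ∪
          {s(j.castSucc, Fin.last (n + 2)), s(k.castSucc, Fin.last (n + 2))} := by
        ext e
        constructor
        · intro he
          by_cases hL : Fin.last (n + 2) ∈ e
          · rcases edges_at_last h2 he hL with rfl | rfl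
            · exact Or.inr (Set.mem_insert _ _)
            · exact Or.inr (Set.mem_insert_of_mem _ rfl)
          · left
            induction e using Sym2.ind with
            | _ x y =>
              have hx : x ≠ Fin.last (n + 2) := fun hc => hL (by rw [hc]; simp)
              have hy : y ≠ Fin.last (n + 2) := fun hc => hL (by rw [hc]; simp)
              obtain ⟨a, rfl⟩ := Fin.exists_castSucc_eq.2 hx
              obtain ⟨b, rfl⟩ := Fin.exists_castSucc_eq.2 hy
              rw [SimpleGraph.mem_edgeSet] at he
              exact (mem_image_castSucc _ a b).2 ((SimpleGraph.mem_edgeSet G').2 ((h1 a b).1 he))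
        · rintro (himg | he)
          · obtain ⟨e', he', rfl⟩ := himg
            induction e' using Sym2.ind with
            | _ a b =>
              rw [Sym2.map_pair_eq, SimpleGraph.mem_edgeSet]
              exact (h1 a b).2 ((SimpleGraph.mem_edgeSet G').1 he')
          · rcases he with rfl | he
            · exact (SimpleGraph.mem_edgeSet G).2 ((h2 j).2 (Or.inl rfl))
            · rw [Set.mem_singleton_iff] at he
              subst he
              exact (SimpleGraph.mem_edgeSet G).2 ((h2 k).2 (Or.inr rfl))
      have hdisj : Disjoint (Sym2.map Fin.castSucc '' G'.edgeSet)
          ({s(j.castSucc, Fin.last (n + 2)), s(k.castSucc, Fin.last (n + 2))} :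
            Set (Sym2 (Fin (n + 3)))) := by
        rw [Set.disjoint_right]
        rintro e (rfl | he)
        · exact last_not_mem_image_castSucc _ _
        · rw [Set.mem_singleton_iff] at he
          subst he
          exact last_not_mem_image_castSucc _ _
      rw [hset, Set.ncard_union_eq hdisj (Set.toFinite _) (Set.toFinite _),
        Set.ncard_image_of_injective _ (sym2_map_castSucc_injective _),
        Set.ncard_pair (by
          intro hc
          rcases Sym2.eq_iff.1 hc with ⟨h', -⟩ | ⟨-, h'⟩
          · exact hjck h'
          · exact hkcL h'.symm)]
      omega

theorem inducedTLaman_tight {B : Finset (Sym2 (Fin N))} (h : InducedTLaman B)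
    (hd : ∀ e ∈ B, ¬ e.IsDiag) : Tight B := by
  obtain ⟨M, H, hH, ⟨φ⟩⟩ := h
  have hM : (vertexSet B).card = M := by
    rw [← Fintype.card_coe, ← Fintype.card_fin M]
    exact Fintype.card_congr φ.toEquiv
  have hedge : (inducedSubgraph B).edgeSet.ncard = H.edgeSet.ncard := by
    rw [← Nat.card_coe_set_eq, ← Nat.card_coe_set_eq]
    exact Nat.card_congr φ.mapEdgeSet
  have hBeq : (inducedSubgraph B).edgeSet = {e | Sym2.map Subtype.val e ∈ B} := by
    rw [inducedSubgraph, SimpleGraph.edgeSet_fromEdgeSet]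
    apply Set.Subset.antisymm Set.diff_subset
    intro e he
    exact ⟨he, fun hdiag => absurd ((Sym2.isDiag_map Subtype.val_injective).2 hdiag) (hd _ he)⟩
  have himg : Sym2.map (Subtype.val : ↥(vertexSet B) → Fin N) ''
      {e | Sym2.map Subtype.val e ∈ B} = ↑B := by
    apply Set.Subset.antisymm
    · rintro e ⟨e', he', rfl⟩
      exact he'
    · intro e he
      rw [Finset.mem_coe] at he
      induction e using Sym2.ind with
      | _ a b =>
        have ha : a ∈ vertexSet B := mem_vertexSet_iff.2 ⟨_, he, by simp⟩
        have hb : b ∈ vertexSet B := mem_vertexSet_iff.2 ⟨_, he, by simp⟩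
        exact ⟨s((⟨a, ha⟩ : ↥(vertexSet B)), ⟨b, hb⟩), by rw [Set.mem_setOf_eq, Sym2.map_pair_eq]; exact he,
          by rw [Sym2.map_pair_eq]⟩
  have hcount : (inducedSubgraph B).edgeSet.ncard = B.card := by
    rw [hBeq, ← Set.ncard_coe_finset, ← himg,
      Set.ncard_image_of_injective _ (Sym2.map.injective Subtype.val_injective)]
  have := tlaman_count hH
  rw [Tight, hM]
  omega

lemma tight_union {n : ℕ} {G : SimpleGraph (Fin n)} (hG : IsTriangulatedLaman G)
    {B1 B2 : Finset (Sym2 (Fin n))} (h1 : ↑B1 ⊆ G.edgeSet) (h2 : ↑B2 ⊆ G.edgeSet)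
    (t1 : Tight B1) (t2 : Tight B2) (hne : (B1 ∩ B2).Nonempty) : Tight (B1 ∪ B2) := by
  have hIsub : ↑(B1 ∩ B2) ⊆ G.edgeSet := fun e he => h1 (Finset.mem_inter.1 he).1
  have hI := sparsity hG _ hIsub hne
  have hUsub : ↑(B1 ∪ B2) ⊆ G.edgeSet := by
    rw [Finset.coe_union]
    exact Set.union_subset h1 h2
  have hUne : (B1 ∪ B2).Nonempty := by
    obtain ⟨e, he⟩ := hne
    exact ⟨e, Finset.mem_union_left _ (Finset.mem_inter.1 he).1⟩
  have hU := sparsity hG _ hUsub hUne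
  have hcardU : (B1 ∪ B2).card + (B1 ∩ B2).card = B1.card + B2.card :=
    Finset.card_union_add_card_inter _ _
  have hVU : vertexSet (B1 ∪ B2) = vertexSet B1 ∪ vertexSet B2 := vertexSet_union _ _
  have hVI : vertexSet (B1 ∩ B2) ⊆ vertexSet B1 ∩ vertexSet B2 :=
    Finset.subset_inter (vertexSet_mono Finset.inter_subset_left)
      (vertexSet_mono Finset.inter_subset_right)
  have hVcard : (vertexSet B1 ∪ vertexSet B2).card + (vertexSet B1 ∩ vertexSet B2).card
      = (vertexSet B1).card + (vertexSet B2).card := Finset.card_union_add_card_inter _ _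
  have hVIcard : (vertexSet (B1 ∩ B2)).card ≤ (vertexSet B1 ∩ vertexSet B2).card :=
    Finset.card_le_card hVI
  rw [Tight] at t1 t2 ⊢
  rw [hVU] at hU ⊢
  omega

lemma collinear_union {s t : Set Plane} {x y : Plane} (hs : Collinear ℝ s) (ht : Collinear ℝ t)
    (hxs : x ∈ s) (hys : y ∈ s) (hxt : x ∈ t) (hyt : y ∈ t) (hxy : x ≠ y) :
    Collinear ℝ (s ∪ t) := by
  have hline : Collinear ℝ ((affineSpan ℝ ({x, y} : Set Plane) : Set Plane)) := by
    unfold Collinear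
    rw [← direction_affineSpan, AffineSubspace.affineSpan_coe, direction_affineSpan]
    exact collinear_pair ℝ x y
  refine Collinear.subset ?_ hline
  rintro z (hz | hz)
  · exact hs.mem_affineSpan_of_mem_of_ne hxs hys hz hxy
  · exact ht.mem_affineSpan_of_mem_of_ne hxt hyt hz hxy

/-- A good edge-set: nonempty tight collinear subset of the edges. -/
def Good {n : ℕ} (G : SimpleGraph (Fin n)) (p : Config (Fin n))
    (B : Finset (Sym2 (Fin n))) : Prop :=
  B.Nonempty ∧ ↑B ⊆ G.edgeSet ∧ Tight B ∧
    Collinear ℝ (p '' (vertexSet B : Set (Fin n)))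

lemma good_union {n : ℕ} {G : SimpleGraph (Fin n)} {p : Config (Fin n)}
    (hG : IsTriangulatedLaman G) (hp : p ∈ ConfigSpace G)
    {B1 B2 : Finset (Sym2 (Fin n))} {e : Sym2 (Fin n)}
    (g1 : Good G p B1) (g2 : Good G p B2) (he1 : e ∈ B1) (he2 : e ∈ B2) :
    Good G p (B1 ∪ B2) := by
  obtain ⟨hne1, hsub1, ht1, hc1⟩ := g1
  obtain ⟨hne2, hsub2, ht2, hc2⟩ := g2
  refine ⟨⟨e, Finset.mem_union_left _ he1⟩,
    (by rw [Finset.coe_union]; exact Set.union_subset hsub1 hsub2),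
    tight_union hG hsub1 hsub2 ht1 ht2 ⟨e, Finset.mem_inter.2 ⟨he1, he2⟩⟩, ?_⟩
  rw [vertexSet_union, Finset.coe_union, Set.image_union]
  induction e using Sym2.ind with
  | _ a b =>
    have hadj : G.Adj a b := (SimpleGraph.mem_edgeSet G).1 (hsub1 he1)
    have hpab : p a ≠ p b := hp a b hadj
    refine collinear_union hc1 hc2 ?_ ?_ ?_ ?_ hpab
    · exact ⟨a, mem_vertexSet_iff.2 ⟨_, he1, by simp⟩, rfl⟩
    · exact ⟨b, mem_vertexSet_iff.2 ⟨_, he1, by simp⟩, rfl⟩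
    · exact ⟨a, mem_vertexSet_iff.2 ⟨_, he2, by simp⟩, rfl⟩
    · exact ⟨b, mem_vertexSet_iff.2 ⟨_, he2, by simp⟩, rfl⟩

lemma good_singleton {n : ℕ} {G : SimpleGraph (Fin n)} {p : Config (Fin n)}
    {e : Sym2 (Fin n)} (he : e ∈ G.edgeSet) : Good G p {e} := by
  induction e using Sym2.ind with
  | _ a b =>
    have hadj : G.Adj a b := (SimpleGraph.mem_edgeSet G).1 he
    refine ⟨Finset.singleton_nonempty _, by simpa using he, tight_singleton hadj.ne, ?_⟩
    rw [vertexSet_singleton]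
    have : ((({a, b} : Finset (Fin n)) : Set (Fin n))) = {a, b} := by simp
    rw [this, Set.image_insert_eq, Set.image_singleton]
    exact collinear_pair ℝ _ _

/-- The maximal good set containing an edge. -/
noncomputable def Cpart {n : ℕ} (G : SimpleGraph (Fin n)) (p : Config (Fin n))
    (e : Sym2 (Fin n)) : Finset (Sym2 (Fin n)) :=
  ((Finset.univ : Finset (Finset (Sym2 (Fin n)))).filter
    (fun B => Good G p B ∧ e ∈ B)).sup id

lemma mem_Cpart {n : ℕ} {G : SimpleGraph (Fin n)} {p : Config (Fin n)}
    {e x : Sym2 (Fin n)} :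
    x ∈ Cpart G p e ↔ ∃ B, Good G p B ∧ e ∈ B ∧ x ∈ B := by
  rw [Cpart, Finset.mem_sup]
  constructor
  · rintro ⟨B, hB, hx⟩
    rw [Finset.mem_filter] at hB
    exact ⟨B, hB.2.1, hB.2.2, hx⟩
  · rintro ⟨B, hg, he, hx⟩
    exact ⟨B, Finset.mem_filter.2 ⟨Finset.mem_univ _, hg, he⟩, hx⟩

lemma subset_Cpart {n : ℕ} {G : SimpleGraph (Fin n)} {p : Config (Fin n)}
    {B : Finset (Sym2 (Fin n))} {e : Sym2 (Fin n)} (g : Good G p B) (he : e ∈ B) :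
    B ⊆ Cpart G p e :=
  fun _ hx => mem_Cpart.2 ⟨B, g, he, hx⟩

lemma good_Cpart {n : ℕ} {G : SimpleGraph (Fin n)} {p : Config (Fin n)}
    (hG : IsTriangulatedLaman G) (hp : p ∈ ConfigSpace G)
    {e : Sym2 (Fin n)} (he : e ∈ G.edgeSet) :
    Good G p (Cpart G p e) ∧ e ∈ Cpart G p e := by
  have heC : e ∈ Cpart G p e :=
    subset_Cpart (good_singleton he) (Finset.mem_singleton_self e) (Finset.mem_singleton_self e)
  have hq : Cpart G p e = ∅ ∨ (Good G p (Cpart G p e) ∧ e ∈ Cpart G p e) := by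
    rw [Cpart]
    refine Finset.sup_induction (p := fun B => B = ∅ ∨ (Good G p B ∧ e ∈ B)) (Or.inl rfl) ?_ ?_
    · rintro a (rfl | ⟨ga, hea⟩) b hb
      · rcases hb with rfl | ⟨gb, heb⟩
        · exact Or.inl (by simp)
        · refine Or.inr ?_
          rw [Finset.sup_eq_union, Finset.empty_union]
          exact ⟨gb, heb⟩
      · rcases hb with rfl | ⟨gb, heb⟩
        · refine Or.inr ?_
          rw [Finset.sup_eq_union, Finset.union_empty]
          exact ⟨ga, hea⟩
        · refine Or.inr ?_
          rw [Finset.sup_eq_union]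
          exact ⟨good_union hG hp ga gb hea heb, Finset.mem_union_left _ hea⟩
    · intro B hB
      rw [Finset.mem_filter] at hB
      exact Or.inr ⟨hB.2.1, hB.2.2⟩
  rcases hq with h0 | h
  · exact absurd (h0 ▸ heC) (Finset.notMem_empty e)
  · exact h

lemma Cpart_eq {n : ℕ} {G : SimpleGraph (Fin n)} {p : Config (Fin n)}
    (hG : IsTriangulatedLaman G) (hp : p ∈ ConfigSpace G)
    {e e' : Sym2 (Fin n)} (hee' : e' ∈ Cpart G p e) : Cpart G p e = Cpart G p e' := by
  obtain ⟨B, gB, heB, he'B⟩ := mem_Cpart.1 hee'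
  apply Finset.Subset.antisymm
  · intro x hx
    obtain ⟨B'', gB'', heB'', hxB''⟩ := mem_Cpart.1 hx
    exact mem_Cpart.2 ⟨B'' ∪ B, good_union hG hp gB'' gB heB'' heB,
      Finset.mem_union_right _ he'B, Finset.mem_union_left _ hxB''⟩
  · intro x hx
    obtain ⟨B'', gB'', he'B'', hxB''⟩ := mem_Cpart.1 hx
    exact mem_Cpart.2 ⟨B'' ∪ B, good_union hG hp gB'' gB he'B'' he'B,
      Finset.mem_union_right _ heB, Finset.mem_union_left _ hxB''⟩

lemma good_isLineLamanPart {n : ℕ} {G : SimpleGraph (Fin n)} {p : Config (Fin n)}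
    (hG : IsTriangulatedLaman G) {B : Finset (Sym2 (Fin n))} (g : Good G p B) :
    IsLineLamanPart p B := by
  obtain ⟨hne, hsub, ht, hc⟩ := g
  refine ⟨?_, hc⟩
  obtain ⟨K, H, hH, hiso⟩ := TL_induced (tight_TL hG B hsub ht)
  exact ⟨K + 2, H, hH, hiso⟩

lemma indepPartition_exists {n : ℕ} {G : SimpleGraph (Fin n)} {p : Config (Fin n)}
    (hG : IsTriangulatedLaman G) (hp : p ∈ ConfigSpace G) :
    IsIndependentPartition G p (G.edgeFinset.image (fun e => Cpart G p e)) := by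
  constructor
  · constructor
    · intro B hB
      obtain ⟨e, heF, rfl⟩ := Finset.mem_image.1 hB
      have he : e ∈ G.edgeSet := SimpleGraph.mem_edgeFinset.1 heF
      obtain ⟨gC, heC⟩ := good_Cpart hG hp he
      exact ⟨gC.1, gC.2.1, good_isLineLamanPart hG gC⟩
    · intro e he
      refine ⟨Cpart G p e, ⟨Finset.mem_image_of_mem _ (SimpleGraph.mem_edgeFinset.2 he),
        (good_Cpart hG hp he).2⟩, ?_⟩
      rintro B' ⟨hB'P, heB'⟩
      obtain ⟨e'', he''F, rfl⟩ := Finset.mem_image.1 hB'P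
      exact Cpart_eq hG hp heB'
  · intro Q hQ B hBQ
    obtain ⟨hne, hsub, hpart⟩ := hQ.1 B hBQ
    obtain ⟨e, heB⟩ := hne
    have gB : Good G p B := ⟨⟨e, heB⟩, hsub,
      inducedTLaman_tight hpart.1
        (fun e' he' => G.not_isDiag_of_mem_edgeSet (hsub he')), hpart.2⟩
    exact ⟨Cpart G p e, Finset.mem_image_of_mem _ (SimpleGraph.mem_edgeFinset.2 (hsub heB)),
      subset_Cpart gB heB⟩

lemma indep_unique {n : ℕ} {G : SimpleGraph (Fin n)} {p : Config (Fin n)}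
    {P1 P2 : Finset (Finset (Sym2 (Fin n)))}
    (h1 : IsIndependentPartition G p P1) (h2 : IsIndependentPartition G p P2) : P1 = P2 := by
  have key : ∀ P1 P2 : Finset (Finset (Sym2 (Fin n))), IsIndependentPartition G p P1 →
      IsIndependentPartition G p P2 → P1 ⊆ P2 := by
    intro P1 P2 h1 h2 B hB
    obtain ⟨hne, hsub, -⟩ := h1.1.1 B hB
    obtain ⟨e, heB⟩ := hne
    obtain ⟨C, hCP2, hBC⟩ := (h2.2 _ h1.1) B hB
    obtain ⟨D, hDP1, hCD⟩ := (h1.2 _ h2.1) C hCP2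
    obtain ⟨U, hU, hUuniq⟩ := h1.1.2 e (hsub heB)
    have hBU : B = U := hUuniq B ⟨hB, heB⟩
    have hDU : D = U := hUuniq D ⟨hDP1, hCD (hBC heB)⟩
    have hCB : C ⊆ B := by
      rw [hBU, ← hDU]
      exact hCD
    rw [Finset.Subset.antisymm hBC hCB]
    exact hCP2
  exact Finset.Subset.antisymm (key _ _ h1 h2) (key _ _ h2 h1)

end IndepAux


open Filter MeasureTheory

theorem stmt_10 {N : ℕ} (G : SimpleGraph (Fin N)) (hG : IsTriangulatedLaman G)
    (p : Config (Fin N)) (hp : p ∈ ConfigSpace G) :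
    ∃! P : Finset (Finset (Sym2 (Fin N))), IsIndependentPartition G p P := by
  refine ⟨G.edgeFinset.image (fun e => IndepAux.Cpart G p e),
    IndepAux.indepPartition_exists hG hp, ?_⟩
  intro Q hQ
  exact IndepAux.indep_unique hQ (IndepAux.indepPartition_exists hG hp)

end
end
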